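/- arXiv:0709.4518 — 2 statements merged into one kernel-verified Lean document; each statement's English description precedes it below -/
import Mathlib

section
/- Let Γ be a simplicial complex on [n] and 1 ≤ i < j ≤ n. The following are equivalent: (i) Γ satisfies the Link condition with respect to {i,j}; (ii) Shift_{ij}(Γ) = C_Γ(ij) ∪ { {i} ∪ F : F ∈ {j} * lk_Γ({i,j}) }; (iii) the Stanley–Reisner ideal I_Γ has no minimal monomial generator divisible by x_i x_j. In particular, if Γ satisfies the Link condition with respect to {i,j}, then Shift_{ij}(Γ) also satisfies the Link condition with respect to {i,j}. -/
/-! Combinatorics of simplicial complexes on subsets of ℕ (vertex set `[n] = Finset.Icc 1 n`). -/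

/-- `Γ` is a simplicial complex on the vertex set `V`. -/
def SimplicialComplexOn (V : Finset ℕ) (Γ : Set (Finset ℕ)) : Prop :=
  (∀ F ∈ Γ, F ⊆ V) ∧ (∀ v ∈ V, ({v} : Finset ℕ) ∈ Γ) ∧
    (∀ F ∈ Γ, ∀ G, G ⊆ F → G ∈ Γ)

/-- The dimension of a simplicial complex, as an integer (`dim Γ = max {|F| - 1 : F ∈ Γ}`). -/
noncomputable def sdim (Γ : Set (Finset ℕ)) : ℤ :=
  sSup ((fun F : Finset ℕ => (F.card : ℤ) - 1) '' Γ)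

/-- A facet of `Γ` is a maximal face. -/
def IsFacet (Γ : Set (Finset ℕ)) (F : Finset ℕ) : Prop :=
  F ∈ Γ ∧ ∀ G ∈ Γ, F ⊆ G → F = G

/-- A complex is pure if all of its facets have the same cardinality. -/
def PureComplex (Γ : Set (Finset ℕ)) : Prop :=
  ∀ F G, IsFacet Γ F → IsFacet Γ G → F.card = G.card

/-- `fvec Γ k` is the number of faces of `Γ` of cardinality `k`, i.e. `f_{k-1}(Γ)`. -/
noncomputable def fvec (Γ : Set (Finset ℕ)) (k : ℕ) : ℕ :=
  {F ∈ Γ | F.card = k}.ncard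

/-- The `h`-vector of a `(d-1)`-dimensional complex:
`h_i = ∑_{j=0}^i (-1)^{i-j} binom(d-j, d-i) f_{j-1}`. -/
noncomputable def hvec (d : ℕ) (Γ : Set (Finset ℕ)) (i : ℕ) : ℤ :=
  ∑ j ∈ Finset.range (i + 1),
    (-1 : ℤ) ^ (i - j) * (Nat.choose (d - j) (d - i) : ℤ) * (fvec Γ j : ℤ)

/-- The link of `Γ` with respect to a face `F`. -/
def linkOf (Γ : Set (Finset ℕ)) (F : Finset ℕ) : Set (Finset ℕ) :=
  {G | Disjoint G F ∧ G ∪ F ∈ Γ}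

/-- The contraction of `Γ` with respect to `{i,j}`, identifying vertex `i` with `j`. -/
def contraction (Γ : Set (Finset ℕ)) (i j : ℕ) : Set (Finset ℕ) :=
  {F | F ∈ Γ ∧ i ∉ F} ∪ {G | ∃ F ∈ Γ, i ∈ F ∧ G = F.erase i ∪ {j}}

/-- The Link condition: `lk_Γ({i}) ∩ lk_Γ({j}) = lk_Γ({i,j})`. -/
def LinkCondition (Γ : Set (Finset ℕ)) (i j : ℕ) : Prop :=
  linkOf Γ {i} ∩ linkOf Γ {j} = linkOf Γ {i, j}

open Classical in
/-- The shift operator `C_{ij}` on faces. -/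
noncomputable def shiftMap (Γ : Set (Finset ℕ)) (i j : ℕ) (F : Finset ℕ) : Finset ℕ :=
  if i ∈ F ∧ j ∉ F ∧ F.erase i ∪ {j} ∉ Γ then F.erase i ∪ {j} else F

/-- `Shift_{ij}(Γ) = {C_{ij}(F) : F ∈ Γ}`. -/
noncomputable def shiftComplex (Γ : Set (Finset ℕ)) (i j : ℕ) : Set (Finset ℕ) :=
  (shiftMap Γ i j) '' Γ

/-- The join `W * Σ = {F ∪ G : F ⊆ W, G ∈ Σ}` of a vertex set with a complex. -/
def joinW (W : Finset ℕ) (C : Set (Finset ℕ)) : Set (Finset ℕ) :=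
  {H | ∃ F ⊆ W, ∃ G ∈ C, H = F ∪ G}

/-- Strong edge decomposability: boundaries of simplices and `{∅}` are strongly edge
decomposable, and recursively, a pure complex satisfying the Link condition w.r.t. an edge
`{i,j}` whose contraction and link are strongly edge decomposable is
strongly edge decomposable. -/
inductive StronglyEdgeDecomposable : Set (Finset ℕ) → Prop
  | trivialComplex : StronglyEdgeDecomposable {(∅ : Finset ℕ)}
  | simplexBoundary (V : Finset ℕ) (hV : V.Nonempty) :
      StronglyEdgeDecomposable {F | F ⊆ V ∧ F ≠ V}
  | contract (Γ : Set (Finset ℕ)) (i j : ℕ) (hij : i < j)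
      (hpure : PureComplex Γ) (hedge : ({i, j} : Finset ℕ) ∈ Γ)
      (hlc : LinkCondition Γ i j)
      (hcon : StronglyEdgeDecomposable (contraction Γ i j))
      (hlk : StronglyEdgeDecomposable (linkOf Γ {i, j})) :
      StronglyEdgeDecomposable Γ

/-- A shifted complex: `F ∈ Γ`, `i ∈ F`, `i < j`, `j ∈ V` imply `(F \ {i}) ∪ {j} ∈ Γ`. -/
def ShiftedComplex (V : Finset ℕ) (Γ : Set (Finset ℕ)) : Prop :=
  ∀ F ∈ Γ, ∀ i ∈ F, ∀ j, i < j → j ∈ V → insert j (F.erase i) ∈ Γ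

/-- A `d`-subset `F ⊆ [n]` is admissible if `n - k ∉ F` implies `[n-d+k, n-k-1] ⊆ F`. -/
def Admissible (n d : ℕ) (F : Finset ℕ) : Prop :=
  F ⊆ Finset.Icc 1 n ∧ F.card = d ∧
    ∀ k < n, (n - k) ∉ F → Finset.Icc (n - d + k) (n - k - 1) ⊆ F

/-- `Δ(n,d)`, the complex generated by all admissible `d`-subsets of `[n]`; by a theorem of
Kalai this is the symmetric algebraic shifted complex `Δˢ(C(n,d))` of the boundary complex of
the cyclic `d`-polytope with `n` vertices. -/
def DeltaC (n d : ℕ) : Set (Finset ℕ) :=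
  if d = 0 then {(∅ : Finset ℕ)} else {G | ∃ F, Admissible n d F ∧ G ⊆ F}

/-- The increasing enumeration of `V`, as a map `{1, …, |V|} → V ⊆ ℕ` (identity elsewhere). -/
noncomputable def vlabel (V : Finset ℕ) (i : ℕ) : ℕ :=
  if h : i - 1 < V.card then (((V.orderIsoOfFin rfl) ⟨i - 1, h⟩ : V) : ℕ) else i

/-- `Δ(V,d)`: the complex `Δ(|V|,d)` relabeled order-isomorphically onto the vertex set `V`. -/
noncomputable def DeltaV (V : Finset ℕ) (d : ℕ) : Set (Finset ℕ) :=
  (fun G : Finset ℕ => G.image (vlabel V)) '' DeltaC V.card d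
/-! Squeezed balls and spheres (Kalai). Monomials on `[m]` are represented as multisets. -/

/-- `U` is a shifted order ideal of monomials on `[m]`: it contains `1` and all variables
`x_1,…,x_m`, is closed under divisibility, and `u·x_i ∈ U`, `i < j ≤ m` imply `u·x_j ∈ U`.
(A monomial is encoded as the multiset of its variable indices.) -/
def IsShiftedOrderIdeal (m : ℕ) (U : Set (Multiset ℕ)) : Prop :=
  (∀ u ∈ U, ∀ i ∈ u, i ∈ Finset.Icc 1 m) ∧ (0 : Multiset ℕ) ∈ U ∧
    (∀ i ∈ Finset.Icc 1 m, ({i} : Multiset ℕ) ∈ U) ∧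
    (∀ u ∈ U, ∀ v, v ≤ u → v ∈ U) ∧
    (∀ u : Multiset ℕ, ∀ i j : ℕ, i < j → j ≤ m → (i ::ₘ u) ∈ U → (j ::ₘ u) ∈ U)

/-- For a monomial `u = x_{i_1}⋯x_{i_k}` (`i_1 ≤ … ≤ i_k`), the `(d+1)`-set
`F_d(u) = {i_1, i_1+1} ∪ {i_2+2, i_2+3} ∪ ⋯ ∪ {i_k+2(k-1), i_k+2k-1} ∪ [n+2k-d, n]`. -/
noncomputable def Fd (n d : ℕ) (u : Multiset ℕ) : Finset ℕ :=
  (Finset.range (Multiset.card u)).biUnion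
      (fun j => {(u.sort (· ≤ ·)).getD j 0 + 2 * j, (u.sort (· ≤ ·)).getD j 0 + 2 * j + 1}) ∪
    Finset.Icc (n + 2 * Multiset.card u - d) n

/-- The squeezed `d`-ball `B_d(U)`: the complex generated by `{F_d(u) : u ∈ U}`. -/
def squeezedBall (n d : ℕ) (U : Set (Multiset ℕ)) : Set (Finset ℕ) :=
  {G | ∃ u ∈ U, G ⊆ Fd n d u}

/-- The boundary of a pure `d`-dimensional complex `B`: the subcomplex generated by the
`(d-1)`-dimensional faces (cardinality-`d` faces) contained in exactly one facet. -/
noncomputable def complexBoundary (d : ℕ) (B : Set (Finset ℕ)) : Set (Finset ℕ) :=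
  {F | ∃ G, F ⊆ G ∧ G ∈ B ∧ G.card = d ∧
    {H | H ∈ B ∧ H.card = d + 1 ∧ G ⊆ H}.ncard = 1}

/-- The squeezed `(d-1)`-sphere `S_d(U) = ∂ B_d(U)`. -/
noncomputable def squeezedSphere (n d : ℕ) (U : Set (Multiset ℕ)) : Set (Finset ℕ) :=
  complexBoundary d (squeezedBall n d U)

/-! The Stanley–Reisner ideal, the degree reverse lexicographic order, initial ideals and
generic initial ideals in the polynomial ring `K[x_1,…,x_n]`, realized as
`MvPolynomial (Fin n) K` with the variable `x_i` being `X ⟨i-1⟩`. -/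

/-- The squarefree monomial `x_F = ∏_{i ∈ F} x_i` (variable `x_i`, `1 ≤ i ≤ n`, is `X ⟨i-1⟩`). -/
noncomputable def faceMonomial (K : Type*) [CommRing K] (n : ℕ) (F : Finset ℕ) :
    MvPolynomial (Fin n) K :=
  ∏ a ∈ Finset.univ.filter (fun a : Fin n => (a : ℕ) + 1 ∈ F), MvPolynomial.X a

/-- The Stanley–Reisner ideal of a complex `Γ` on `[n]`, generated by the squarefree
monomials `x_F` with `F ⊆ [n]`, `F ∉ Γ`. -/
noncomputable def srIdeal (K : Type*) [CommRing K] (n : ℕ) (Γ : Set (Finset ℕ)) :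
    Ideal (MvPolynomial (Fin n) K) :=
  Ideal.span {f | ∃ F : Finset ℕ, F ⊆ Finset.Icc 1 n ∧ F ∉ Γ ∧ f = faceMonomial K n F}

/-- The degree reverse lexicographic order (induced by `x_1 > x_2 > ⋯`, smaller index =
bigger variable): `u < v` iff `deg u < deg v`, or degrees agree and at the largest index
where `u, v` differ, `u` has the larger exponent. -/
def DegRevLexLT {σ : Type*} [LinearOrder σ] (u v : σ →₀ ℕ) : Prop :=
  (u.sum fun _ e => e) < (v.sum fun _ e => e) ∨
    ((u.sum fun _ e => e) = (v.sum fun _ e => e) ∧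
      ∃ k, v k < u k ∧ ∀ l, k < l → u l = v l)

/-- The initial ideal of `I` w.r.t. the degree reverse lexicographic order: the ideal
spanned by the leading monomials of the elements of `I`. -/
noncomputable def initialIdeal {σ : Type*} [LinearOrder σ] {K : Type*} [Field K]
    (I : Ideal (MvPolynomial σ K)) : Ideal (MvPolynomial σ K) :=
  Ideal.span {m | ∃ f ∈ I, ∃ u ∈ f.support, m = MvPolynomial.monomial u (1 : K) ∧
    ∀ v ∈ f.support, v ≠ u → DegRevLexLT v u}

/-- The linear change of coordinates of `K[x_1,…,x_n]` associated with a matrix `M`,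
`x_j ↦ ∑_i M_{ij} x_i`. -/
noncomputable def genLin {K : Type*} [CommRing K] {n : ℕ} (M : Matrix (Fin n) (Fin n) K) :
    MvPolynomial (Fin n) K →ₐ[K] MvPolynomial (Fin n) K :=
  MvPolynomial.aeval (fun j => ∑ a : Fin n, MvPolynomial.C (M a j) * MvPolynomial.X a)

/-- `J` is the generic initial ideal (w.r.t. degrevlex) of `I`: there is a nonempty Zariski
open subset `U ⊆ GL_n(K)` (the nonvanishing locus of a nonzero polynomial in the matrix
entries) such that `in(φ(I)) = J` for every `φ ∈ U`. -/
def IsGin {K : Type*} [Field K] {n : ℕ} (I J : Ideal (MvPolynomial (Fin n) K)) : Prop :=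
  ∃ p : MvPolynomial (Fin n × Fin n) K, p ≠ 0 ∧
    ∀ M : Matrix (Fin n) (Fin n) K, IsUnit M.det →
      MvPolynomial.eval (fun q => M q.1 q.2) p ≠ 0 →
      initialIdeal (Ideal.map (genLin M) I) = J

/-- The set `G(J)` of (exponent vectors of) minimal monomial generators of a monomial
ideal `J`. -/
def minimalMonomialGens {σ : Type*} {K : Type*} [Field K] (J : Ideal (MvPolynomial σ K)) :
    Set (σ →₀ ℕ) :=
  {u | MvPolynomial.monomial u (1 : K) ∈ J ∧
    ∀ v : σ →₀ ℕ, v ≤ u → MvPolynomial.monomial v (1 : K) ∈ J → v = u}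

/-- The squarefree operation `Φ` on exponent vectors:
`x_{i_1} x_{i_2} ⋯ x_{i_k} ↦ {i_1, i_2+1, …, i_k+k-1}` (`i_1 ≤ i_2 ≤ ⋯ ≤ i_k`). -/
noncomputable def sqfreeOp {n : ℕ} (u : Fin n →₀ ℕ) : Finset ℕ :=
  (List.zipWith (· + ·)
      ((u.toMultiset.map (fun a : Fin n => (a : ℕ) + 1)).sort (· ≤ ·))
      (List.range (Multiset.card (u.toMultiset)))).toFinset

/-- `Δs` is the symmetric algebraic shifted complex of `Γ`: its Stanley–Reisner ideal is
`Φ(Gin(I_Γ))`, i.e. `Δs` consists of the `F ⊆ [n]` containing no `Φ(u)`, `u ∈ G(Gin(I_Γ))`. -/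
def IsSymmetricShift (K : Type*) [Field K] (n : ℕ) (Γ Δs : Set (Finset ℕ)) : Prop :=
  ∃ J : Ideal (MvPolynomial (Fin n) K), IsGin (srIdeal K n Γ) J ∧
    Δs = {F | F ⊆ Finset.Icc 1 n ∧ ∀ u ∈ minimalMonomialGens J, ¬ sqfreeOp u ⊆ F}

/-- The exponent vector (in `K[x_1,…,x_n]`) of a monomial given as a multiset. -/
noncomputable def multisetToExp (n : ℕ) (u : Multiset ℕ) : Fin n →₀ ℕ :=
  Finsupp.equivFunOnFinite.symm (fun a : Fin n => u.count ((a : ℕ) + 1))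
/-! The exterior algebra `E = ⋀⟨e_1, e_2, …⟩` over `K`, exterior face ideals, the reverse
lexicographic order, initial ideals and exterior algebraic shifting. We realize `E` as the
exterior algebra of the `K`-module `ℕ → K`, with `e_i` the image of `Pi.single i 1`. -/

/-- The exterior algebra `⋀ (ℕ → K)` hosting all the exterior face ideals. -/
abbrev ExtAlg (K : Type*) [Field K] := ExteriorAlgebra K (ℕ → K)

/-- The exterior monomial `e_F = e_{i_1} ∧ ⋯ ∧ e_{i_k}` for `F = {i_1 < ⋯ < i_k}`. -/
noncomputable def eMon (K : Type*) [Field K] (F : Finset ℕ) : ExtAlg K :=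
  ((F.sort (· ≤ ·)).map (fun i => ExteriorAlgebra.ι K (Pi.single i (1 : K)))).prod

/-- The exterior face ideal `J_Γ` of a complex `Γ` on the vertex set `V`, generated by the
monomials `e_F` with `F ⊆ V`, `F ∉ Γ`. -/
noncomputable def extFaceIdeal (K : Type*) [Field K] (V : Finset ℕ) (Γ : Set (Finset ℕ)) :
    Ideal (ExtAlg K) :=
  Ideal.span {x | ∃ F : Finset ℕ, F ⊆ V ∧ F ∉ Γ ∧ x = eMon K F}

/-- The alternating form computing the determinant of the coordinates indexed by `F`. -/
noncomputable def detCoeffAlt (K : Type*) [Field K] (F : Finset ℕ) :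
    (ℕ → K) [⋀^Fin F.card]→ₗ[K] K :=
  (Matrix.detRowAlternating).compLinearMap
    (LinearMap.funLeft K K (fun b : Fin F.card => ((F.orderIsoOfFin rfl b : F) : ℕ)))

/-- The coefficient functional of the basis monomial `e_F`: the linear functional on the
exterior algebra giving the coefficient of `e_F` in the monomial basis expansion. -/
noncomputable def extCoeff (K : Type*) [Field K] (F : Finset ℕ) : ExtAlg K →ₗ[K] K :=
  ExteriorAlgebra.liftAlternating
    (fun i => if h : i = F.card then (detCoeffAlt K F).domDomCongr (finCongr h.symm) else 0)

/-- The reverse lexicographic order (induced by `1 > 2 > ⋯`) on exterior monomials: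
`F < G` iff `|F| < |G|`, or the cardinalities agree and the largest element of the
symmetric difference `F Δ G` belongs to `F`. -/
def RevLexLT (F G : Finset ℕ) : Prop :=
  F.card < G.card ∨ (F.card = G.card ∧
    ∃ k, k ∈ F ∧ k ∉ G ∧ ∀ l, k < l → (l ∈ F ↔ l ∈ G))

/-- The initial ideal of an ideal `I` of the exterior algebra w.r.t. the reverse
lexicographic order: spanned by the leading monomials `e_F` of the elements of `I`. -/
noncomputable def extInitialIdeal (K : Type*) [Field K] (I : Ideal (ExtAlg K)) :
    Ideal (ExtAlg K) :=
  Ideal.span {x | ∃ y ∈ I, ∃ F : Finset ℕ, x = eMon K F ∧ extCoeff K F y ≠ 0 ∧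
    ∀ G : Finset ℕ, extCoeff K G y ≠ 0 → G ≠ F → RevLexLT G F}

/-- The linear change of coordinates of `span{e_i : i ∈ V}` (identity elsewhere)
associated with a `|V| × |V|` matrix `M`. -/
noncomputable def extLinMap (K : Type*) [Field K] (V : Finset ℕ)
    (M : Matrix (Fin V.card) (Fin V.card) K) : (ℕ → K) →ₗ[K] (ℕ → K) where
  toFun v k :=
    if h : k ∈ V then
      ∑ a : Fin V.card,
        M ((V.orderIsoOfFin rfl).symm ⟨k, h⟩) a * v ((V.orderIsoOfFin rfl a : V) : ℕ)
    else v k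
  map_add' x y := by
    funext k
    by_cases h : k ∈ V <;> simp [h, mul_add, Finset.sum_add_distrib]
  map_smul' c x := by
    funext k
    by_cases h : k ∈ V <;> simp [h, Finset.mul_sum, mul_left_comm]

/-- The algebra automorphism of the exterior algebra induced by `extLinMap`. -/
noncomputable def extAlgMap (K : Type*) [Field K] (V : Finset ℕ)
    (M : Matrix (Fin V.card) (Fin V.card) K) : ExtAlg K →ₐ[K] ExtAlg K :=
  ExteriorAlgebra.lift K ⟨(ExteriorAlgebra.ι K).comp (extLinMap K V M),
    fun _ => ExteriorAlgebra.ι_sq_zero _⟩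

/-- `Δe` is the exterior algebraic shifted complex of `Γ` (as complexes on the vertex set
`V`): `J_{Δe} = Gin(J_Γ)`, where the generic initial ideal is witnessed by a nonempty
Zariski open subset of `GL(V)` (the nonvanishing locus of a nonzero polynomial in the
matrix entries). -/
def IsExteriorShift (K : Type*) [Field K] (V : Finset ℕ) (Γ Δe : Set (Finset ℕ)) : Prop :=
  ∃ p : MvPolynomial (Fin V.card × Fin V.card) K, p ≠ 0 ∧
    ∀ M : Matrix (Fin V.card) (Fin V.card) K, IsUnit M.det →
      MvPolynomial.eval (fun q => M q.1 q.2) p ≠ 0 →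
      extInitialIdeal K (Ideal.map (extAlgMap K V M) (extFaceIdeal K V Γ)) =
        extFaceIdeal K V Δe

/-- The simplicial complex on `V` whose exterior face ideal is the (monomial) ideal `J`. -/
noncomputable def complexOfExtIdeal (K : Type*) [Field K] (V : Finset ℕ)
    (J : Ideal (ExtAlg K)) : Set (Finset ℕ) :=
  {F | F ⊆ V ∧ eMon K F ∉ J}

/-- Nongeneric exterior shifting `Δ_φ(Γ)`, defined by `J_{Δ_φ(Γ)} = in(φ(J_Γ))` for an
individual linear change of coordinates `φ` given by the matrix `M`. -/
noncomputable def DeltaPhi (K : Type*) [Field K] (V : Finset ℕ)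
    (M : Matrix (Fin V.card) (Fin V.card) K) (Γ : Set (Finset ℕ)) : Set (Finset ℕ) :=
  complexOfExtIdeal K V (extInitialIdeal K (Ideal.map (extAlgMap K V M) (extFaceIdeal K V Γ)))

/-- The shifting-theoretic upper bound relation for a `(d-1)`-dimensional complex `Γ` on the
vertex set `V`: `Δᵉ(Γ) ⊆ Δ(V,d)`. -/
def ShiftingUBR (K : Type*) [Field K] (V : Finset ℕ) (d : ℕ) (Γ : Set (Finset ℕ)) : Prop :=
  ∀ Δe, IsExteriorShift K V Γ Δe → Δe ⊆ DeltaV V d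
/-! Graded pieces, linear systems of parameters, the Cohen–Macaulay property and the strong
Lefschetz property for graded quotients `A = K[x_1,…,x_n]/I`. -/

/-- The degree-`k` homogeneous component of the graded quotient `S/I` (the image of the
degree-`k` homogeneous polynomials). -/
noncomputable def quotPiece {K : Type*} [Field K] {n : ℕ}
    (I : Ideal (MvPolynomial (Fin n) K)) (k : ℕ) :
    Submodule K (MvPolynomial (Fin n) K ⧸ I) :=
  (MvPolynomial.homogeneousSubmodule (Fin n) K k).map (Ideal.Quotient.mkₐ K I).toLinearMap

/-- `θ_1, …, θ_d` is a linear system of parameters of `S/I`: the `θ_a` are linear forms and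
the quotient `S/(I + (θ_1,…,θ_d))` has Krull dimension `≤ 0`. -/
def IsLSOP {K : Type*} [Field K] {n : ℕ} (I : Ideal (MvPolynomial (Fin n) K)) (d : ℕ)
    (θ : Fin d → MvPolynomial (Fin n) K) : Prop :=
  (∀ a, (θ a).IsHomogeneous 1) ∧
    ringKrullDim (MvPolynomial (Fin n) K ⧸ (I ⊔ Ideal.span (Set.range θ))) ≤ 0

set_option synthInstance.maxHeartbeats 1000000 in
/-- The graded quotient `A = S/I` is Cohen–Macaulay: a linear system of parameters of
length `d = dim A` forms a regular `A`-sequence. -/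
def IsCMIdeal {K : Type*} [Field K] {n : ℕ} (I : Ideal (MvPolynomial (Fin n) K)) : Prop :=
  ∃ d : ℕ, ringKrullDim (MvPolynomial (Fin n) K ⧸ I) = d ∧
    ∃ θ : Fin d → MvPolynomial (Fin n) K, IsLSOP I d θ ∧
      RingTheory.Sequence.IsRegular (MvPolynomial (Fin n) K ⧸ I)
        ((List.ofFn θ).map (⇑(Ideal.Quotient.mk I)))

/-- The graded quotient `A = S/I` has the strong Lefschetz property: `A` is Cohen–Macaulay
and there are an l.s.o.p. `θ_1, …, θ_d` (`d = dim A`) and a linear form `ω` such that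
`ω^{s-2i} : (A/θA)_i → (A/θA)_{s-i}` is bijective for `0 ≤ i ≤ s/2`, where
`s = max{k : (A/θA)_k ≠ 0}`. -/
def HasSLPIdeal {K : Type*} [Field K] {n : ℕ} (I : Ideal (MvPolynomial (Fin n) K)) : Prop :=
  IsCMIdeal I ∧
    ∃ d : ℕ, ringKrullDim (MvPolynomial (Fin n) K ⧸ I) = d ∧
      ∃ θ : Fin d → MvPolynomial (Fin n) K, IsLSOP I d θ ∧
        ∃ ω : MvPolynomial (Fin n) K, ω.IsHomogeneous 1 ∧
          ∃ s : ℕ,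
            (quotPiece (I ⊔ Ideal.span (Set.range θ)) s ≠ ⊥ ∧
              ∀ k, s < k → quotPiece (I ⊔ Ideal.span (Set.range θ)) k = ⊥) ∧
            ∀ i : ℕ, 2 * i ≤ s →
              Set.BijOn
                (fun x => (Ideal.Quotient.mk (I ⊔ Ideal.span (Set.range θ)) ω) ^ (s - 2 * i) * x)
                (quotPiece (I ⊔ Ideal.span (Set.range θ)) i)
                (quotPiece (I ⊔ Ideal.span (Set.range θ)) (s - i))

/-- A simplicial complex is Cohen–Macaulay over `K` if its Stanley–Reisner ring is. -/
def ComplexCM (K : Type*) [Field K] (n : ℕ) (Γ : Set (Finset ℕ)) : Prop :=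
  IsCMIdeal (srIdeal K n Γ)

/-- A `(d-1)`-dimensional complex `Γ` has the strong Lefschetz property if `h_d(Γ) > 0` and
its Stanley–Reisner ring has the strong Lefschetz property. -/
def ComplexSLP (K : Type*) [Field K] (n d : ℕ) (Γ : Set (Finset ℕ)) : Prop :=
  0 < hvec d Γ d ∧ HasSLPIdeal (srIdeal K n Γ)

/-- A `1`-dimensional simplicial sphere (a cycle): a complex all of whose faces are edges or
smaller, every vertex lying in exactly two edges, whose edge graph is connected. -/
def IsCycleComplex (V : Finset ℕ) (Γ : Set (Finset ℕ)) : Prop :=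
  SimplicialComplexOn V Γ ∧ (∀ F ∈ Γ, F.card ≤ 2) ∧
    (∀ v ∈ V, {e | e ∈ Γ ∧ e.card = 2 ∧ v ∈ e}.ncard = 2) ∧
    ∀ u ∈ V, ∀ v ∈ V,
      Relation.ReflTransGen (fun a b : ℕ => ({a, b} : Finset ℕ) ∈ Γ) u v

namespace Stmt2Aux

lemma us (s : Finset ℕ) (a : ℕ) : s ∪ {a} = insert a s := by
  ext x; simp [or_comm]

lemma su (s : Finset ℕ) (a : ℕ) : {a} ∪ s = insert a s := by
  ext x; simp

lemma lc_iff {Γ : Set (Finset ℕ)} {i j : ℕ}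
    (hdc : ∀ F ∈ Γ, ∀ G, G ⊆ F → G ∈ Γ) (hne : i ≠ j) :
    LinkCondition Γ i j ↔
      ∀ G : Finset ℕ, i ∉ G → j ∉ G → insert i G ∈ Γ → insert j G ∈ Γ →
        insert i (insert j G) ∈ Γ := by
  have hl : ∀ G : Finset ℕ, G ∪ ({i, j} : Finset ℕ) = insert i (insert j G) := by
    intro G
    show G ∪ insert i {j} = _
    rw [Finset.union_insert, us]
  unfold LinkCondition linkOf
  simp only [Set.ext_iff, Set.mem_inter_iff, Set.mem_setOf_eq,
    Finset.disjoint_singleton_right, Finset.disjoint_insert_right, us, hl]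
  constructor
  · intro h G hi hj h1 h2
    exact ((h G).1 ⟨⟨hi, h1⟩, ⟨hj, h2⟩⟩).2
  · intro h G
    constructor
    · rintro ⟨⟨hi, h1⟩, ⟨hj, h2⟩⟩
      exact ⟨⟨hi, hj⟩, h G hi hj h1 h2⟩
    · rintro ⟨⟨hi, hj⟩, hG⟩
      refine ⟨⟨hi, hdc _ hG _ ?_⟩, ⟨hj, hdc _ hG _ ?_⟩⟩
      · exact Finset.insert_subset_insert _ (Finset.subset_insert _ _)
      · rw [Finset.insert_comm]
        exact Finset.insert_subset_insert _ (Finset.subset_insert _ _)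

/-- Membership in the RHS complex of statement (ii). -/
lemma mem_rhs_iff {Γ : Set (Finset ℕ)} {i j : ℕ} (hne : i ≠ j) (H : Finset ℕ) :
    (H ∈ contraction Γ i j ∪
        {H | ∃ F ∈ joinW {j} (linkOf Γ {i, j}), H = insert i F}) ↔
      ((H ∈ Γ ∧ i ∉ H) ∨ (∃ F ∈ Γ, i ∈ F ∧ H = insert j (F.erase i)) ∨
        (i ∈ H ∧ j ∉ H ∧ insert j H ∈ Γ) ∨ (H ∈ Γ ∧ i ∈ H ∧ j ∈ H)) := by
  have hl : ∀ G : Finset ℕ, G ∪ ({i, j} : Finset ℕ) = insert i (insert j G) := by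
    intro G; show G ∪ insert i {j} = _; rw [Finset.union_insert, us]
  constructor
  · rintro (hc | hd)
    · rcases hc with ⟨h1, h2⟩ | ⟨F, hF, hiF, rfl⟩
      · exact Or.inl ⟨h1, h2⟩
      · exact Or.inr (Or.inl ⟨F, hF, hiF, (us _ _)⟩)
    · obtain ⟨F, ⟨F', hF', G, ⟨hGd, hGu⟩, rfl⟩, rfl⟩ := hd
      rw [Finset.disjoint_insert_right, Finset.disjoint_singleton_right] at hGd
      rw [hl] at hGu
      rcases Finset.subset_singleton_iff.1 hF' with rfl | rfl
      · rw [Finset.empty_union]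
        refine Or.inr (Or.inr (Or.inl ⟨Finset.mem_insert_self _ _, ?_, ?_⟩))
        · intro h
          rcases Finset.mem_insert.1 h with h | h
          · exact hne h.symm
          · exact hGd.2 h
        · rw [Finset.insert_comm]; exact hGu
      · rw [Stmt2Aux.su _ _]
        refine Or.inr (Or.inr (Or.inr ⟨hGu, Finset.mem_insert_self _ _, ?_⟩))
        exact Finset.mem_insert_of_mem (Finset.mem_insert_self _ _)
  · rintro (⟨h1, h2⟩ | ⟨F, hF, hiF, rfl⟩ | ⟨h1, h2, h3⟩ | ⟨h1, h2, h3⟩)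
    · exact Or.inl (Or.inl ⟨h1, h2⟩)
    · exact Or.inl (Or.inr ⟨F, hF, hiF, (us _ _).symm⟩)
    · refine Or.inr ⟨H.erase i, ⟨∅, by simp, H.erase i, ⟨?_, ?_⟩, (Finset.empty_union _).symm⟩, ?_⟩
      · rw [Finset.disjoint_insert_right, Finset.disjoint_singleton_right]
        exact ⟨Finset.notMem_erase _ _, fun hj => h2 (Finset.mem_of_mem_erase hj)⟩
      · rw [hl, Finset.insert_comm, Finset.insert_erase h1]
        exact h3
      · rw [Finset.insert_erase h1]
    · refine Or.inr ⟨insert j ((H.erase i).erase j), ⟨{j}, le_refl _,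
        (H.erase i).erase j, ⟨?_, ?_⟩, (Stmt2Aux.su _ _).symm⟩, ?_⟩
      · rw [Finset.disjoint_insert_right, Finset.disjoint_singleton_right]
        exact ⟨fun h => Finset.notMem_erase _ _ (Finset.mem_of_mem_erase h),
          Finset.notMem_erase _ _⟩
      · rw [hl, Finset.insert_comm, Finset.erase_right_comm,
          Finset.insert_erase (Finset.mem_erase.2 ⟨hne, h2⟩), Finset.insert_erase h3]
        exact h1
      · rw [Finset.insert_erase (Finset.mem_erase.2 ⟨hne.symm, h3⟩), Finset.insert_erase h2]

end Stmt2Aux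

namespace Stmt2Aux

lemma shiftMap_of_not {Γ : Set (Finset ℕ)} {i j : ℕ} {F : Finset ℕ}
    (h : ¬(i ∈ F ∧ j ∉ F ∧ F.erase i ∪ {j} ∉ Γ)) : shiftMap Γ i j F = F := by
  unfold shiftMap; rw [if_neg h]

lemma shift_eq {Γ : Set (Finset ℕ)} {i j : ℕ}
    (hdc : ∀ F ∈ Γ, ∀ G, G ⊆ F → G ∈ Γ) (hne : i ≠ j) (hlc : LinkCondition Γ i j) :
    shiftComplex Γ i j = contraction Γ i j ∪
      {H | ∃ F ∈ joinW {j} (linkOf Γ {i, j}), H = insert i F} := by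
  ext H
  rw [mem_rhs_iff hne]
  constructor
  · rintro ⟨F, hF, rfl⟩
    unfold shiftMap
    by_cases hc : i ∈ F ∧ j ∉ F ∧ F.erase i ∪ {j} ∉ Γ
    · rw [if_pos hc]
      exact Or.inr (Or.inl ⟨F, hF, hc.1, us _ _⟩)
    · rw [if_neg hc]
      push_neg at hc
      by_cases hiF : i ∈ F
      · by_cases hjF : j ∈ F
        · exact Or.inr (Or.inr (Or.inr ⟨hF, hiF, hjF⟩))
        · have h3 : insert j (F.erase i) ∈ Γ := by rw [← us]; exact hc hiF hjF
          have h4 := (lc_iff hdc hne).1 hlc (F.erase i) (Finset.notMem_erase _ _)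
            (fun hh => hjF (Finset.mem_of_mem_erase hh))
            (by rw [Finset.insert_erase hiF]; exact hF) h3
          refine Or.inr (Or.inr (Or.inl ⟨hiF, hjF, ?_⟩))
          rw [← Finset.insert_erase hiF, Finset.insert_comm]
          exact h4
      · exact Or.inl ⟨hF, hiF⟩
  · rintro (⟨h1, h2⟩ | ⟨F, hF, hiF, rfl⟩ | ⟨h1, h2, h3⟩ | ⟨h1, h2, h3⟩)
    · exact ⟨H, h1, shiftMap_of_not (fun hc => h2 hc.1)⟩
    · by_cases hjF : j ∈ F
      · have he : insert j (F.erase i) = F.erase i :=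
          Finset.insert_eq_self.2 (Finset.mem_erase.2 ⟨hne.symm, hjF⟩)
        rw [he]
        exact ⟨F.erase i, hdc _ hF _ (Finset.erase_subset _ _),
          shiftMap_of_not (fun hc => Finset.notMem_erase _ _ hc.1)⟩
      · by_cases hin : insert j (F.erase i) ∈ Γ
        · refine ⟨insert j (F.erase i), hin, shiftMap_of_not (fun hc => ?_)⟩
          rcases Finset.mem_insert.1 hc.1 with h | h
          · exact hne h
          · exact Finset.notMem_erase _ _ h
        · exact ⟨F, hF, by
            unfold shiftMap
            rw [if_pos ⟨hiF, hjF, by rw [us]; exact hin⟩, us]⟩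
    · have hH : H ∈ Γ := hdc _ h3 _ (Finset.subset_insert _ _)
      have hin : H.erase i ∪ {j} ∈ Γ := by
        rw [us]
        exact hdc _ h3 _ (Finset.insert_subset_insert _ (Finset.erase_subset _ _))
      exact ⟨H, hH, shiftMap_of_not (fun hc => hc.2.2 hin)⟩
    · exact ⟨H, h1, shiftMap_of_not (fun hc => hc.2.1 h3)⟩

lemma lc_of_shift_eq {Γ : Set (Finset ℕ)} {i j : ℕ}
    (hdc : ∀ F ∈ Γ, ∀ G, G ⊆ F → G ∈ Γ) (hne : i ≠ j)
    (heq : shiftComplex Γ i j = contraction Γ i j ∪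
      {H | ∃ F ∈ joinW {j} (linkOf Γ {i, j}), H = insert i F}) :
    LinkCondition Γ i j := by
  rw [lc_iff hdc hne]
  intro G hi hj h1 h2
  have hF : insert i G ∈ shiftComplex Γ i j := by
    refine ⟨insert i G, h1, shiftMap_of_not (fun hc => hc.2.2 ?_)⟩
    rw [Finset.erase_insert hi, us]
    exact h2
  rw [heq, mem_rhs_iff hne] at hF
  rcases hF with ⟨_, hni⟩ | ⟨F, _, _, hEq⟩ | ⟨_, _, h3⟩ | ⟨_, _, hjH⟩
  · exact absurd (Finset.mem_insert_self _ _) hni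
  · have : j ∈ insert i G := by
      rw [hEq]; exact Finset.mem_insert_self _ _
    rcases Finset.mem_insert.1 this with h | h
    · exact absurd h.symm hne
    · exact absurd h hj
  · rw [Finset.insert_comm]; exact h3
  · rcases Finset.mem_insert.1 hjH with h | h
    · exact absurd h.symm hne
    · exact absurd h hj

lemma lc_shift {Γ : Set (Finset ℕ)} {i j : ℕ}
    (hdc : ∀ F ∈ Γ, ∀ G, G ⊆ F → G ∈ Γ) (hne : i ≠ j) (hlc : LinkCondition Γ i j) :
    LinkCondition (shiftComplex Γ i j) i j := by
  have heq := shift_eq hdc hne hlc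
  have hl : ∀ G : Finset ℕ, G ∪ ({i, j} : Finset ℕ) = insert i (insert j G) := by
    intro G; show G ∪ insert i {j} = _; rw [Finset.union_insert, us]
  unfold LinkCondition linkOf
  ext G
  simp only [Set.mem_inter_iff, Set.mem_setOf_eq, Finset.disjoint_singleton_right,
    Finset.disjoint_insert_right, us, hl]
  rw [heq]
  constructor
  · rintro ⟨⟨hi, hA⟩, ⟨hj, _⟩⟩
    refine ⟨⟨hi, hj⟩, ?_⟩
    rw [mem_rhs_iff hne] at hA ⊢
    rcases hA with ⟨_, hni⟩ | ⟨F, _, hiF, hEq⟩ | ⟨_, _, h3⟩ | ⟨_, _, hjH⟩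
    · exact absurd (Finset.mem_insert_self _ _) hni
    · exfalso
      have : i ∈ insert j (F.erase i) := by rw [← hEq]; exact Finset.mem_insert_self _ _
      rcases Finset.mem_insert.1 this with h | h
      · exact hne h
      · exact Finset.notMem_erase _ _ h
    · refine Or.inr (Or.inr (Or.inr ⟨?_, Finset.mem_insert_self _ _,
        Finset.mem_insert_of_mem (Finset.mem_insert_self _ _)⟩))
      rw [Finset.insert_comm]; exact h3
    · exfalso
      rcases Finset.mem_insert.1 hjH with h | h
      · exact hne h.symm
      · exact hj h
  · rintro ⟨⟨hi, hj⟩, hC⟩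
    rw [mem_rhs_iff hne] at hC
    have hin : insert i (insert j G) ∈ Γ := by
      rcases hC with ⟨_, hni⟩ | ⟨F, _, hiF, hEq⟩ | ⟨_, hnj, _⟩ | ⟨h, _, _⟩
      · exact absurd (Finset.mem_insert_self _ _) hni
      · exfalso
        have : i ∈ insert j (F.erase i) := by rw [← hEq]; exact Finset.mem_insert_self _ _
        rcases Finset.mem_insert.1 this with h | h
        · exact hne h
        · exact Finset.notMem_erase _ _ h
      · exact absurd (Finset.mem_insert_of_mem (Finset.mem_insert_self _ _)) hnj
      · exact h
    refine ⟨⟨hi, ?_⟩, ⟨hj, ?_⟩⟩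
    · rw [mem_rhs_iff hne]
      refine Or.inr (Or.inr (Or.inl ⟨Finset.mem_insert_self _ _, ?_, ?_⟩))
      · intro h
        rcases Finset.mem_insert.1 h with h | h
        · exact hne h.symm
        · exact hj h
      · rw [Finset.insert_comm]; exact hin
    · rw [mem_rhs_iff hne]
      refine Or.inl ⟨hdc _ hin _ (Finset.subset_insert _ _), ?_⟩
      intro h
      rcases Finset.mem_insert.1 h with h | h
      · exact hne h
      · exact hi h

end Stmt2Aux

namespace Stmt2Aux

noncomputable def fexp (n : ℕ) (F : Finset ℕ) : Fin n →₀ ℕ :=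
  ⟨Finset.univ.filter (fun a : Fin n => (a : ℕ) + 1 ∈ F),
    fun a => if (a : ℕ) + 1 ∈ F then 1 else 0, by
      intro a; by_cases h : (a : ℕ) + 1 ∈ F <;> simp [h]⟩

lemma fexp_apply (n : ℕ) (F : Finset ℕ) (a : Fin n) :
    fexp n F a = if (a : ℕ) + 1 ∈ F then 1 else 0 := rfl

lemma faceMonomial_eq (K : Type*) [CommRing K] (n : ℕ) (F : Finset ℕ) :
    faceMonomial K n F = MvPolynomial.monomial (fexp n F) 1 := by
  rw [← MvPolynomial.prod_X_pow_eq_monomial]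
  unfold faceMonomial
  refine Finset.prod_congr rfl (fun a ha => ?_)
  have hx : (a : ℕ) + 1 ∈ F := by
    have h0 := Finsupp.mem_support_iff.1 ha
    rw [fexp_apply] at h0
    by_contra hc
    rw [if_neg hc] at h0
    exact h0 rfl
  rw [fexp_apply, if_pos hx, pow_one]

lemma fexp_le_iff {n : ℕ} {F : Finset ℕ} {u : Fin n →₀ ℕ} :
    fexp n F ≤ u ↔ ∀ a : Fin n, (a : ℕ) + 1 ∈ F → 1 ≤ u a := by
  rw [Finsupp.le_def]
  constructor
  · intro h a ha
    have := h a
    rwa [fexp_apply, if_pos ha] at this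
  · intro h a
    rw [fexp_apply]
    by_cases ha : (a : ℕ) + 1 ∈ F
    · rw [if_pos ha]; exact h a ha
    · rw [if_neg ha]; exact Nat.zero_le _

lemma fexp_mono {n : ℕ} {F F' : Finset ℕ} (h : F ⊆ F') : fexp n F ≤ fexp n F' := by
  rw [fexp_le_iff]
  intro a ha
  rw [fexp_apply, if_pos (h ha)]

lemma subset_of_fexp_le {n : ℕ} {F F' : Finset ℕ} (hF : F ⊆ Finset.Icc 1 n)
    (h : fexp n F ≤ fexp n F') : F ⊆ F' := by
  intro k hk
  have hk' := Finset.mem_Icc.1 (hF hk)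
  have hlt : k - 1 < n := by omega
  have h1 : ((⟨k - 1, hlt⟩ : Fin n) : ℕ) + 1 = k := by simp; omega
  have := (fexp_le_iff.1 h) ⟨k - 1, hlt⟩ (by rw [h1]; exact hk)
  rw [fexp_apply] at this
  by_contra hk2
  rw [if_neg (by rw [h1]; exact hk2)] at this
  omega

lemma mem_sr_iff {K : Type} [Field K] {n : ℕ} {Γ : Set (Finset ℕ)} (u : Fin n →₀ ℕ) :
    (MvPolynomial.monomial u (1 : K)) ∈ srIdeal K n Γ ↔
      ∃ F, F ⊆ Finset.Icc 1 n ∧ F ∉ Γ ∧ fexp n F ≤ u := by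
  have hset : {f | ∃ F : Finset ℕ, F ⊆ Finset.Icc 1 n ∧ F ∉ Γ ∧ f = faceMonomial K n F}
      = (fun e => MvPolynomial.monomial e (1 : K)) ''
          {e | ∃ F, F ⊆ Finset.Icc 1 n ∧ F ∉ Γ ∧ e = fexp n F} := by
    ext f
    constructor
    · rintro ⟨F, h1, h2, rfl⟩
      exact ⟨fexp n F, ⟨F, h1, h2, rfl⟩, (faceMonomial_eq K n F).symm⟩
    · rintro ⟨e, ⟨F, h1, h2, rfl⟩, rfl⟩
      exact ⟨F, h1, h2, (faceMonomial_eq K n F).symm⟩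
  unfold srIdeal
  rw [hset, MvPolynomial.mem_ideal_span_monomial_image]
  have hsupp : (MvPolynomial.monomial u (1 : K)).support = {u} := by
    classical
    rw [MvPolynomial.support_monomial, if_neg one_ne_zero]
  rw [hsupp]
  simp only [Finset.mem_singleton, forall_eq, Set.mem_setOf_eq]
  constructor
  · rintro ⟨e, ⟨F, h1, h2, rfl⟩, hle⟩
    exact ⟨F, h1, h2, hle⟩
  · rintro ⟨F, h1, h2, hle⟩
    exact ⟨fexp n F, ⟨F, h1, h2, rfl⟩, hle⟩

lemma exists_min_nonface {Γ : Set (Finset ℕ)} :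
    ∀ H : Finset ℕ, H ∉ Γ → ∃ F, F ⊆ H ∧ F ∉ Γ ∧ ∀ G, G ⊂ F → G ∈ Γ := by
  classical
  intro H
  induction H using Finset.strongInduction with
  | _ H ih =>
    intro hH
    by_cases h : ∀ G, G ⊂ H → G ∈ Γ
    · exact ⟨H, le_refl _, hH, h⟩
    · push_neg at h
      obtain ⟨G, hG1, hG2⟩ := h
      obtain ⟨F, h1, h2, h3⟩ := ih G hG1 hG2
      exact ⟨F, h1.trans hG1.subset, h2, h3⟩

/-- The Link condition implies no minimal generator is divisible by `x_i x_j`. -/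
lemma lc_to_gens {K : Type} [Field K] {i j n : ℕ} {Γ : Set (Finset ℕ)}
    (hi : 1 ≤ i) (hij : i < j) (hj : j ≤ n)
    (hdc : ∀ F ∈ Γ, ∀ G, G ⊆ F → G ∈ Γ) (hlc : LinkCondition Γ i j)
    (u : Fin n →₀ ℕ) (hu : u ∈ minimalMonomialGens (srIdeal K n Γ))
    (hpos : 0 < u ⟨i - 1, by omega⟩ ∧ 0 < u ⟨j - 1, by omega⟩) : False := by
  have hne : i ≠ j := Nat.ne_of_lt hij
  obtain ⟨hmem, hmin⟩ := hu
  obtain ⟨F, hF1, hF2, hF3⟩ := (mem_sr_iff u).1 hmem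
  have heq : fexp n F = u :=
    hmin _ hF3 ((mem_sr_iff _).2 ⟨F, hF1, hF2, le_refl _⟩)
  -- i ∈ F and j ∈ F
  have hiF : i ∈ F := by
    have := hpos.1
    rw [← heq, fexp_apply] at this
    by_contra hc
    rw [if_neg (by simpa using (by omega : i - 1 + 1 = i) ▸ hc)] at this
    omega
  have hjF : j ∈ F := by
    have := hpos.2
    rw [← heq, fexp_apply] at this
    by_contra hc
    rw [if_neg (by simpa using (by omega : j - 1 + 1 = j) ▸ hc)] at this
    omega
  -- F is a minimal nonface
  obtain ⟨F₀, g1, g2, g3⟩ := exists_min_nonface F hF2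
  have hFeq : F₀ = F := by
    have hle : fexp n F₀ ≤ u := le_trans (fexp_mono g1) hF3
    have := hmin _ hle ((mem_sr_iff _).2 ⟨F₀, g1.trans hF1, g2, le_refl _⟩)
    exact Finset.Subset.antisymm g1 (subset_of_fexp_le hF1 (by rw [heq, this]))
  rw [hFeq] at g3
  -- derive contradiction from the Link condition
  have hGij : (F.erase i).erase j = (F.erase j).erase i := Finset.erase_right_comm
  have h1 : insert i ((F.erase i).erase j) ∈ Γ := by
    rw [hGij, Finset.insert_erase (Finset.mem_erase.2 ⟨hne, hiF⟩)]
    exact g3 _ (Finset.erase_ssubset hjF)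
  have h2 : insert j ((F.erase i).erase j) ∈ Γ := by
    rw [Finset.insert_erase (Finset.mem_erase.2 ⟨hne.symm, hjF⟩)]
    exact g3 _ (Finset.erase_ssubset hiF)
  have := (lc_iff hdc hne).1 hlc ((F.erase i).erase j)
    (fun h => Finset.notMem_erase _ _ (Finset.mem_of_mem_erase h))
    (Finset.notMem_erase _ _) h1 h2
  rw [Finset.insert_erase (Finset.mem_erase.2 ⟨hne.symm, hjF⟩),
    Finset.insert_erase hiF] at this
  exact hF2 this

lemma gens_to_lc {K : Type} [Field K] {i j n : ℕ} {Γ : Set (Finset ℕ)}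
    (hi : 1 ≤ i) (hij : i < j) (hj : j ≤ n)
    (hΓ : SimplicialComplexOn (Finset.Icc 1 n) Γ)
    (hg : ∀ u ∈ minimalMonomialGens (srIdeal K n Γ),
      ¬ (0 < u ⟨i - 1, by omega⟩ ∧ 0 < u ⟨j - 1, by omega⟩)) :
    LinkCondition Γ i j := by
  obtain ⟨hsub, hvert, hdc⟩ := hΓ
  have hne : i ≠ j := Nat.ne_of_lt hij
  rw [lc_iff hdc hne]
  intro G hiG hjG h1 h2
  by_contra hH
  set H := insert i (insert j G) with hHdef
  have hGsub : G ⊆ Finset.Icc 1 n :=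
    fun x hx => hsub _ h1 (Finset.mem_insert_of_mem hx)
  have hHsub : H ⊆ Finset.Icc 1 n := by
    refine Finset.insert_subset (Finset.mem_Icc.2 ⟨hi, by omega⟩)
      (Finset.insert_subset (Finset.mem_Icc.2 ⟨by omega, hj⟩) hGsub)
  obtain ⟨F, g1, g2, g3⟩ := exists_min_nonface H hH
  have hiF : i ∈ F := by
    by_contra hc
    refine g2 (hdc _ h2 F ?_)
    intro x hx
    rcases Finset.mem_insert.1 (g1 hx) with rfl | hx'
    · exact absurd hx hc
    · exact hx'
  have hjF : j ∈ F := by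
    by_contra hc
    refine g2 (hdc _ h1 F ?_)
    intro x hx
    rcases Finset.mem_insert.1 (g1 hx) with rfl | hx'
    · exact Finset.mem_insert_self _ _
    · rcases Finset.mem_insert.1 hx' with rfl | hx''
      · exact absurd hx hc
      · exact Finset.mem_insert_of_mem hx''
  have humem : fexp n F ∈ minimalMonomialGens (srIdeal K n Γ) := by
    refine ⟨(mem_sr_iff _).2 ⟨F, g1.trans hHsub, g2, le_refl _⟩, ?_⟩
    intro v hv hvmem
    obtain ⟨F', k1, k2, k3⟩ := (mem_sr_iff _).1 hvmem
    have hsub' : F' ⊆ F := subset_of_fexp_le k1 (k3.trans hv)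
    have hF'F : F' = F := by
      by_contra hc
      exact k2 (g3 F' (lt_of_le_of_ne hsub' hc))
    rw [hF'F] at k3
    exact le_antisymm hv k3
  refine hg _ humem ⟨?_, ?_⟩
  · rw [fexp_apply, if_pos (by simpa using (by omega : i - 1 + 1 = i) ▸ hiF)]
    omega
  · rw [fexp_apply, if_pos (by simpa using (by omega : j - 1 + 1 = j) ▸ hjF)]
    omega

end Stmt2Aux


/-- Lemma 2.1. For a complex `Γ` on `[n]` and `1 ≤ i < j ≤ n`, the
following are equivalent: (i) the Link condition w.r.t. `{i,j}`;
(ii) `Shift_{ij}(Γ) = C_Γ(ij) ∪ { {i} ∪ F : F ∈ {j} * lk_Γ({i,j}) }`;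
(iii) `I_Γ` has no minimal monomial generator divisible by `x_i x_j`.
In particular, the Link condition w.r.t. `{i,j}` passes to `Shift_{ij}(Γ)`. -/
theorem stmt2 (K : Type) [Field K] (n i j : ℕ) (hi : 1 ≤ i) (hij : i < j) (hj : j ≤ n)
    (Γ : Set (Finset ℕ)) (hΓ : SimplicialComplexOn (Finset.Icc 1 n) Γ) :
    (LinkCondition Γ i j ↔
      shiftComplex Γ i j =
        contraction Γ i j ∪
          {H | ∃ F ∈ joinW {j} (linkOf Γ {i, j}), H = insert i F}) ∧
    (LinkCondition Γ i j ↔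
      ∀ u ∈ minimalMonomialGens (srIdeal K n Γ),
        ¬ (0 < u ⟨i - 1, by omega⟩ ∧ 0 < u ⟨j - 1, by omega⟩)) ∧
    (LinkCondition Γ i j → LinkCondition (shiftComplex Γ i j) i j) := by
  have hne : i ≠ j := Nat.ne_of_lt hij
  exact ⟨⟨fun hlc => Stmt2Aux.shift_eq hΓ.2.2 hne hlc,
      fun heq => Stmt2Aux.lc_of_shift_eq hΓ.2.2 hne heq⟩,
    ⟨fun hlc u hu hpos => absurd hpos
        (fun hp => Stmt2Aux.lc_to_gens hi hij hj hΓ.2.2 hlc u hu hp),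
      fun hg => Stmt2Aux.gens_to_lc hi hij hj hΓ hg⟩,
    fun hlc => Stmt2Aux.lc_shift hΓ.2.2 hne hlc⟩
end

section
/- Let Γ be a (d−1)-dimensional strongly edge decomposable simplicial complex. Then h_i(Γ) = h_{d−i}(Γ) for i = 0,1,…,d, and h_0(Γ) ≤ h_1(Γ) ≤ ⋯ ≤ h_{⌊d/2⌋}(Γ). -/
/- ######### auxiliary ######### -/

def DownClosed (Γ : Set (Finset ℕ)) : Prop := ∀ F ∈ Γ, ∀ G, G ⊆ F → G ∈ Γ

def IsConeOver (Γ : Set (Finset ℕ)) (v : ℕ) : Prop := ∀ F ∈ Γ, insert v F ∈ Γ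

lemma sed_empty_mem {Γ : Set (Finset ℕ)} (h : StronglyEdgeDecomposable Γ) :
    (∅ : Finset ℕ) ∈ Γ := by
  induction h with
  | trivialComplex => rfl
  | simplexBoundary V hV =>
      exact ⟨Finset.empty_subset V, fun h => hV.ne_empty h.symm⟩
  | contract Γ i j hij hpure hedge hlc hcon hlk ihc ihl =>
      rcases ihc with ⟨h1, _⟩ | ⟨F, hF, hiF, hFe⟩
      · exact h1
      · have : j ∈ (∅ : Finset ℕ) := by rw [hFe]; simp
        simp at this

lemma sed_not_cone {Γ : Set (Finset ℕ)} (h : StronglyEdgeDecomposable Γ) :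
    ∀ v : ℕ, ¬ IsConeOver Γ v := by
  induction h with
  | trivialComplex =>
      intro v hc
      have := hc ∅ rfl
      simp only [LawfulSingleton.insert_empty_eq, Set.mem_singleton_iff] at this
      exact Finset.singleton_ne_empty v this
  | simplexBoundary V hV =>
      intro v hc
      by_cases hvV : v ∈ V
      · have her : (V.erase v : Finset ℕ) ∈ {F | F ⊆ V ∧ F ≠ V} := by
          refine ⟨Finset.erase_subset _ _, fun h => ?_⟩
          have := Finset.notMem_erase v V
          rw [h] at this; exact this hvV
        have := hc _ her
        rw [Finset.insert_erase hvV] at this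
        exact this.2 rfl
      · have hem : (∅ : Finset ℕ) ∈ {F | F ⊆ V ∧ F ≠ V} :=
          ⟨Finset.empty_subset V, fun h => hV.ne_empty h.symm⟩
        have := hc _ hem
        exact hvV (this.1 (by simp))
  | contract Γ i j hij hpure hedge hlc hcon hlk ihc ihl =>
      intro v hc
      by_cases hvi : v = i
      · -- contraction is a cone over j
        refine ihc j (fun G hG => ?_)
        rcases hG with ⟨hG1, hG2⟩ | ⟨F, hF, hiF, hFe⟩
        · -- G ∈ Γ, i ∉ G ; insert i G ∈ Γ, its image is G ∪ {j}
          have h1 : insert i G ∈ Γ := hvi ▸ hc G hG1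
          refine Or.inr ⟨insert i G, h1, Finset.mem_insert_self i G, ?_⟩
          rw [Finset.erase_insert hG2, Finset.union_comm, ← Finset.insert_eq]
        · refine Or.inr ⟨F, hF, hiF, ?_⟩
          rw [hFe]
          simp
      · by_cases hvj : v = j
        · refine ihc j (fun G hG => ?_)
          rcases hG with ⟨hG1, hG2⟩ | ⟨F, hF, hiF, hFe⟩
          · refine Or.inl ⟨hvj ▸ hc G hG1, ?_⟩
            simp only [Finset.mem_insert]
            push_neg
            exact ⟨fun h => (by omega : ¬ i = j) h, hG2⟩
          · refine Or.inr ⟨F, hF, hiF, ?_⟩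
            rw [hFe]
            ext x; simp [Finset.mem_insert]
        · -- link is a cone over v
          refine ihl v (fun G hG => ?_)
          obtain ⟨hdis, hun⟩ := hG
          have hv' : v ∉ ({i, j} : Finset ℕ) := by simp [hvi, hvj]
          constructor
          · rw [Finset.disjoint_insert_left]
            exact ⟨hv', hdis⟩
          · rw [Finset.insert_union]
            exact hc _ hun

/- ######### counting ######### -/

lemma union_singleton' (s : Finset ℕ) (a : ℕ) : s ∪ {a} = insert a s := by
  ext x; simp [or_comm]

lemma shift_card {F : Finset ℕ} {i j : ℕ} (hij : i ≠ j) (hiF : i ∈ F) (hjF : j ∉ F) :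
    (F.erase i ∪ {j}).card = F.card := by
  rw [union_singleton', Finset.card_insert_of_notMem (by simp [hjF, Ne.symm hij]),
    Finset.card_erase_of_mem hiF]
  have : 1 ≤ F.card := Finset.card_pos.2 ⟨i, hiF⟩
  omega

lemma shift_injOn {i j : ℕ} (hij : i ≠ j) :
    Set.InjOn (fun F : Finset ℕ => F.erase i ∪ {j}) {F : Finset ℕ | i ∈ F ∧ j ∉ F} := by
  rintro F ⟨hiF, hjF⟩ F' ⟨hiF', hjF'⟩ h
  simp only at h
  ext x
  by_cases hxi : x = i
  · subst hxi; simp [hiF, hiF']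
  · by_cases hxj : x = j
    · subst hxj; simp [hjF, hjF']
    · have := Finset.ext_iff.1 h x
      simpa [Finset.mem_union, Finset.mem_erase, hxi, hxj] using this

lemma contraction_downClosed {Γ : Set (Finset ℕ)} {i j : ℕ} (hdc : DownClosed Γ)
    (hij : i ≠ j) : DownClosed (contraction Γ i j) := by
  rintro F hF G hGF
  rcases hF with ⟨h1, h2⟩ | ⟨F', hF', hiF', rfl⟩
  · exact Or.inl ⟨hdc F h1 G hGF, fun h => h2 (hGF h)⟩
  · have hiG : i ∉ G := fun h => by simpa [hij] using hGF h
    by_cases hjG : j ∈ G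
    · refine Or.inr ⟨insert i (G.erase j), ?_, Finset.mem_insert_self _ _, ?_⟩
      · apply hdc _ hF'
        intro x hx
        rcases Finset.mem_insert.1 hx with rfl | hx
        · exact hiF'
        · have hxG := Finset.mem_of_mem_erase hx
          have hxj := Finset.ne_of_mem_erase hx
          have := hGF hxG
          rcases Finset.mem_union.1 this with h | h
          · exact Finset.mem_of_mem_erase h
          · exact absurd (Finset.mem_singleton.1 h) hxj
      · rw [Finset.erase_insert (by simp [hiG]), union_singleton', Finset.insert_erase hjG]
    · refine Or.inl ⟨hdc _ hF' G ?_, hiG⟩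
      intro x hx
      have := hGF hx
      rcases Finset.mem_union.1 this with h | h
      · exact Finset.mem_of_mem_erase h
      · exact absurd (Finset.mem_singleton.1 h) (fun hh => hjG (hh ▸ hx))

lemma link_downClosed {Γ : Set (Finset ℕ)} (hdc : DownClosed Γ) (E : Finset ℕ) :
    DownClosed (linkOf Γ E) := by
  rintro F ⟨hdis, hun⟩ G hGF
  exact ⟨hdis.mono_left hGF, hdc _ hun _ (Finset.union_subset_union_left hGF)⟩

lemma link_finite {Γ : Set (Finset ℕ)} (hfin : Γ.Finite) (E : Finset ℕ) :
    (linkOf Γ E).Finite := by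
  apply Set.Finite.of_finite_image (f := fun G => G ∪ E)
  · exact hfin.subset (by rintro _ ⟨G, ⟨_, h⟩, rfl⟩; exact h)
  · rintro G ⟨hdG, _⟩ G' ⟨hdG', _⟩ h
    simp only at h
    have : (G ∪ E) \ E = (G' ∪ E) \ E := by rw [h]
    rwa [Finset.union_sdiff_right, Finset.sdiff_eq_self_of_disjoint hdG,
      Finset.union_sdiff_right, Finset.sdiff_eq_self_of_disjoint hdG'] at this

lemma contraction_finite {Γ : Set (Finset ℕ)} (hfin : Γ.Finite) (i j : ℕ) :
    (contraction Γ i j).Finite := by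
  apply Set.Finite.subset (hfin.union (hfin.image (fun F => F.erase i ∪ {j})))
  rintro F (⟨h, _⟩ | ⟨F', hF', _, rfl⟩)
  · exact Or.inl h
  · exact Or.inr ⟨F', hF', rfl⟩

set_option maxHeartbeats 1000000 in
lemma fvec_contract {Γ : Set (Finset ℕ)} {i j : ℕ} (hdc : DownClosed Γ) (hfin : Γ.Finite)
    (hij : i ≠ j) (hedge : ({i,j} : Finset ℕ) ∈ Γ) (hlc : LinkCondition Γ i j) (k : ℕ) :
    fvec Γ k = fvec (contraction Γ i j) k
      + (if k = 0 then 0 else fvec (linkOf Γ {i,j}) (k-1))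
      + (if k ≤ 1 then 0 else fvec (linkOf Γ {i,j}) (k-2)) := by
  classical
  have hedge' : ({i, j} : Finset ℕ) = {i} ∪ {j} := by ext x; simp
  set T0 : Set (Finset ℕ) := {F | F ∈ Γ ∧ F.card = k ∧ i ∉ F} with hT0
  set T1 : Set (Finset ℕ) :=
    {F | F ∈ Γ ∧ F.card = k ∧ i ∈ F ∧ j ∉ F ∧ F.erase i ∪ {j} ∉ Γ} with hT1
  set T2 : Set (Finset ℕ) :=
    {F | F ∈ Γ ∧ F.card = k ∧ i ∈ F ∧ j ∉ F ∧ F.erase i ∪ {j} ∈ Γ} with hT2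
  set T3 : Set (Finset ℕ) := {F | F ∈ Γ ∧ F.card = k ∧ i ∈ F ∧ j ∈ F} with hT3
  have fin0 : T0.Finite := hfin.subset (fun F hF => hF.1)
  have fin1 : T1.Finite := hfin.subset (fun F hF => hF.1)
  have fin2 : T2.Finite := hfin.subset (fun F hF => hF.1)
  have fin3 : T3.Finite := hfin.subset (fun F hF => hF.1)
  -- split fvec Γ k
  have hsplit : fvec Γ k = T0.ncard + T1.ncard + T2.ncard + T3.ncard := by
    have he : {F ∈ Γ | F.card = k} = (T0 ∪ T1) ∪ (T2 ∪ T3) := by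
      ext F
      simp only [hT0, hT1, hT2, hT3, Set.mem_setOf_eq, Set.mem_union]
      by_cases h1 : F ∈ Γ <;> by_cases h2 : F.card = k <;> by_cases h3 : i ∈ F <;>
        by_cases h4 : j ∈ F <;> by_cases h5 : F.erase i ∪ {j} ∈ Γ <;> tauto
    rw [fvec, he, Set.ncard_union_eq ?_ (fin0.union fin1) (fin2.union fin3),
      Set.ncard_union_eq ?_ fin0 fin1, Set.ncard_union_eq ?_ fin2 fin3]
    · ring
    · rw [Set.disjoint_left]; intro F hF hF'
      simp only [hT2, hT3, Set.mem_setOf_eq] at hF hF'; tauto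
    · rw [Set.disjoint_left]; intro F hF hF'
      simp only [hT0, hT1, Set.mem_setOf_eq] at hF hF'; tauto
    · rw [Set.disjoint_left]; intro F hF hF'
      simp only [hT0, hT1, hT2, hT3, Set.mem_setOf_eq, Set.mem_union] at hF hF'; tauto
  -- contraction count
  have hcon : fvec (contraction Γ i j) k = T0.ncard + T1.ncard := by
    have he : {F ∈ contraction Γ i j | F.card = k}
        = T0 ∪ (fun F => F.erase i ∪ {j}) '' T1 := by
      ext G
      constructor
      · rintro ⟨hG, hcard⟩
        rcases hG with ⟨h1, h2⟩ | ⟨F, hF, hiF, rfl⟩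
        · exact Or.inl ⟨h1, hcard, h2⟩
        · by_cases hjF : j ∈ F
          · have heq : F.erase i ∪ {j} = F.erase i := by
              rw [union_singleton',
                Finset.insert_eq_self.2 (Finset.mem_erase.2 ⟨Ne.symm hij, hjF⟩)]
            refine Or.inl ⟨?_, hcard, by simp [hij]⟩
            rw [heq]
            exact hdc F hF _ (Finset.erase_subset i F)
          · by_cases hσF : F.erase i ∪ {j} ∈ Γ
            · exact Or.inl ⟨hσF, hcard, by simp [hij]⟩
            · refine Or.inr ⟨F, ⟨hF, ?_, hiF, hjF, hσF⟩, rfl⟩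
              rw [← hcard]
              exact (shift_card hij hiF hjF).symm
      · rintro (⟨h1, h2, h3⟩ | ⟨F, ⟨hF, hcard, hiF, hjF, hσF⟩, rfl⟩)
        · exact ⟨Or.inl ⟨h1, h3⟩, h2⟩
        · exact ⟨Or.inr ⟨F, hF, hiF, rfl⟩, (shift_card hij hiF hjF).trans hcard⟩
    rw [fvec, he, Set.ncard_union_eq ?_ fin0 (fin1.image _),
      Set.ncard_image_of_injOn ((shift_injOn hij).mono (fun F hF => (⟨hF.2.2.1, hF.2.2.2.1⟩ : i ∈ F ∧ j ∉ F)))]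
    rw [Set.disjoint_left]
    rintro F hF ⟨F', hF', rfl⟩
    exact hF'.2.2.2.2 hF.1
  -- T2 count : k ≥ 1
  have hlk2 : k ≠ 0 → T2.ncard = fvec (linkOf Γ {i,j}) (k-1) := by
    intro hk
    have he : {G ∈ linkOf Γ {i,j} | G.card = k-1} = (fun F => F.erase i) '' T2 := by
      ext G
      constructor
      · rintro ⟨⟨hdis, hun⟩, hcard⟩
        have hiG : i ∉ G := fun h => Finset.disjoint_left.1 hdis h (by simp)
        have hjG : j ∉ G := fun h => Finset.disjoint_left.1 hdis h (by simp)
        refine ⟨insert i G, ⟨?_, ?_, Finset.mem_insert_self _ _, ?_, ?_⟩, ?_⟩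
        · refine hdc _ hun _ ?_
          intro x hx
          rcases Finset.mem_insert.1 hx with rfl | hx
          · simp
          · exact Finset.mem_union_left _ hx
        · rw [Finset.card_insert_of_notMem hiG, hcard]; omega
        · simp only [Finset.mem_insert]; push_neg; exact ⟨Ne.symm hij, hjG⟩
        · rw [Finset.erase_insert hiG]
          refine hdc _ hun _ ?_
          intro x hx
          rcases Finset.mem_union.1 hx with hx | hx
          · exact Finset.mem_union_left _ hx
          · exact Finset.mem_union_right _ (by simpa using Or.inr (Finset.mem_singleton.1 hx))
        · simp only
          rw [Finset.erase_insert hiG]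
      · rintro ⟨F, ⟨hF, hcard, hiF, hjF, hσF⟩, rfl⟩
        simp only
        -- F.erase i ∈ link
        have h1 : F.erase i ∈ linkOf Γ {i} ∩ linkOf Γ {j} := by
          constructor
          · refine ⟨by simp, ?_⟩
            rw [union_singleton', Finset.insert_erase hiF]; exact hF
          · refine ⟨Finset.disjoint_singleton_right.2 (by simp [hjF]), hσF⟩
        rw [hlc] at h1
        refine ⟨h1, ?_⟩
        rw [Finset.card_erase_of_mem hiF, hcard]
    rw [fvec, he, Set.ncard_image_of_injOn]
    intro F hF F' hF' h
    simp only at h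
    rw [← Finset.insert_erase hF.2.2.1, ← Finset.insert_erase hF'.2.2.1, h]
  -- T3 count : k ≥ 2
  have hlk3 : 2 ≤ k → T3.ncard = fvec (linkOf Γ {i,j}) (k-2) := by
    intro hk
    have he : {G ∈ linkOf Γ {i,j} | G.card = k-2} = (fun F => F \ {i,j}) '' T3 := by
      ext G
      constructor
      · rintro ⟨⟨hdis, hun⟩, hcard⟩
        refine ⟨G ∪ {i,j}, ⟨hun, ?_, by simp, by simp⟩, ?_⟩
        · rw [Finset.card_union_of_disjoint hdis, hcard,
            Finset.card_insert_of_notMem (by simp [hij]), Finset.card_singleton]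
          omega
        · simp only
          rw [Finset.union_sdiff_right, Finset.sdiff_eq_self_of_disjoint hdis]
      · rintro ⟨F, ⟨hF, hcard, hiF, hjF⟩, rfl⟩
        simp only
        have hsub : ({i,j} : Finset ℕ) ⊆ F := by
          intro x hx; rcases Finset.mem_insert.1 hx with rfl | hx
          · exact hiF
          · exact (Finset.mem_singleton.1 hx) ▸ hjF
        refine ⟨⟨Finset.sdiff_disjoint, ?_⟩, ?_⟩
        · rw [Finset.sdiff_union_of_subset hsub]; exact hF
        · rw [Finset.card_sdiff_of_subset hsub, hcard,
            Finset.card_insert_of_notMem (by simp [hij]), Finset.card_singleton]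
    rw [fvec, he, Set.ncard_image_of_injOn]
    intro F hF F' hF' h
    simp only at h
    have hsub : ({i,j} : Finset ℕ) ⊆ F := by
      intro x hx; rcases Finset.mem_insert.1 hx with rfl | hx
      · exact hF.2.2.1
      · exact (Finset.mem_singleton.1 hx) ▸ hF.2.2.2
    have hsub' : ({i,j} : Finset ℕ) ⊆ F' := by
      intro x hx; rcases Finset.mem_insert.1 hx with rfl | hx
      · exact hF'.2.2.1
      · exact (Finset.mem_singleton.1 hx) ▸ hF'.2.2.2
    rw [← Finset.sdiff_union_of_subset hsub, ← Finset.sdiff_union_of_subset hsub', h]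
  -- conclude
  have hT2e : k = 0 → T2 = ∅ := by
    intro hk; ext F
    simp only [hT2, Set.mem_setOf_eq, Set.mem_empty_iff_false, iff_false]
    rintro ⟨_, hc, hi, _⟩
    exact (Finset.card_ne_zero_of_mem hi) (hk ▸ hc)
  have hT3e : k ≤ 1 → T3 = ∅ := by
    intro hk; ext F
    simp only [hT3, Set.mem_setOf_eq, Set.mem_empty_iff_false, iff_false]
    rintro ⟨_, hc, hi, hj⟩
    have : 1 < F.card := Finset.one_lt_card.2 ⟨i, hi, j, hj, hij⟩
    omega
  by_cases hk0 : k = 0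
  · subst hk0
    rw [if_pos rfl, if_pos (by norm_num), hsplit, hcon, hT2e rfl, hT3e (by norm_num)]
    simp
  · by_cases hk1 : k ≤ 1
    · rw [if_neg hk0, if_pos hk1, hsplit, hcon, hlk2 hk0, hT3e hk1]
      simp [add_comm]
    · rw [if_neg hk0, if_neg hk1, hsplit, hcon, hlk2 hk0, hlk3 (by omega)]

/- ######### h-vector algebra ######### -/

lemma hvec_zero_eq (d : ℕ) (Γ : Set (Finset ℕ)) : hvec d Γ 0 = (fvec Γ 0 : ℤ) := by
  simp [hvec]

lemma hvec_contract_diff {Γ C L : Set (Finset ℕ)} (d : ℕ)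
    (hsplit : ∀ k, (fvec Γ k : ℤ) = (fvec C k : ℤ)
      + (if k = 0 then 0 else (fvec L (k-1) : ℤ))
      + (if k ≤ 1 then 0 else (fvec L (k-2) : ℤ))) (M : ℕ) :
    hvec d Γ (M+1) - hvec d C (M+1)
      = (∑ k ∈ Finset.range M,
          ((-1:ℤ)^(M-k) * ((d-(k+1)).choose (d-(M+1)) : ℤ)
            + (-1:ℤ)^(M-(k+1)) * ((d-(k+2)).choose (d-(M+1)) : ℤ)) * (fvec L k : ℤ))
        + (fvec L M : ℤ) := by
  rw [hvec, hvec, ← Finset.sum_sub_distrib]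
  have e1 : ∀ j ∈ Finset.range (M+1+1),
      ((-1:ℤ)^(M+1-j) * ((d-j).choose (d-(M+1)) : ℤ) * (fvec Γ j : ℤ)
        - (-1:ℤ)^(M+1-j) * ((d-j).choose (d-(M+1)) : ℤ) * (fvec C j : ℤ))
      = (-1:ℤ)^(M+1-j) * ((d-j).choose (d-(M+1)) : ℤ) *
          ((if j = 0 then (0:ℤ) else (fvec L (j-1):ℤ))
            + (if j ≤ 1 then (0:ℤ) else (fvec L (j-2):ℤ))) := by
    intro j _
    rw [hsplit j]; ring
  rw [Finset.sum_congr rfl e1, Finset.sum_range_succ' _ (M+1)]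
  have e2 : ∀ k ∈ Finset.range (M+1),
      (-1:ℤ)^(M+1-(k+1)) * ((d-(k+1)).choose (d-(M+1)) : ℤ) *
          ((if k+1 = 0 then (0:ℤ) else (fvec L (k+1-1):ℤ))
            + (if k+1 ≤ 1 then (0:ℤ) else (fvec L (k+1-2):ℤ)))
      = (-1:ℤ)^(M-k) * ((d-(k+1)).choose (d-(M+1)) : ℤ) * (fvec L k : ℤ)
        + (-1:ℤ)^(M-k) * ((d-(k+1)).choose (d-(M+1)) : ℤ)
            * (if k = 0 then (0:ℤ) else (fvec L (k-1):ℤ)) := by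
    intro k _
    have ha : M+1-(k+1) = M-k := by omega
    have hb : k+1-1 = k := by omega
    rw [ha, hb]
    by_cases hk : k = 0
    · subst hk; norm_num
    · have hc : ¬ (k+1 ≤ 1) := by omega
      have hd' : k+1-2 = k-1 := by omega
      rw [if_neg (by omega : ¬ k+1 = 0), if_neg hc, if_neg hk, hd']
      ring
  rw [Finset.sum_congr rfl e2, Finset.sum_add_distrib]
  have e3 : (∑ k ∈ Finset.range (M+1),
      (-1:ℤ)^(M-k) * ((d-(k+1)).choose (d-(M+1)) : ℤ)
        * (if k = 0 then (0:ℤ) else (fvec L (k-1):ℤ)))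
      = ∑ k ∈ Finset.range M,
        (-1:ℤ)^(M-(k+1)) * ((d-(k+2)).choose (d-(M+1)) : ℤ) * (fvec L k : ℤ) := by
    rw [Finset.sum_range_succ' (fun k => (-1:ℤ)^(M-k) * ((d-(k+1)).choose (d-(M+1)) : ℤ)
        * (if k = 0 then (0:ℤ) else (fvec L (k-1):ℤ))) M]
    norm_num
  have e4 : (-1:ℤ)^(M-M) * ((d-(M+1)).choose (d-(M+1)) : ℤ) * (fvec L M : ℤ)
      = (fvec L M : ℤ) := by
    rw [Nat.sub_self, Nat.choose_self]; norm_num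
  rw [e3, Finset.sum_range_succ, e4]
  simp only [add_mul]
  rw [Finset.sum_add_distrib]
  norm_num
  ring

lemma hvec_contract_mid {Γ C L : Set (Finset ℕ)} {d : ℕ}
    (hsplit : ∀ k, (fvec Γ k : ℤ) = (fvec C k : ℤ)
      + (if k = 0 then 0 else (fvec L (k-1) : ℤ))
      + (if k ≤ 1 then 0 else (fvec L (k-2) : ℤ)))
    {M : ℕ} (hM : M + 1 ≤ d - 1) (hd : 2 ≤ d) :
    hvec d Γ (M+1) = hvec d C (M+1) + hvec (d-2) L M := by
  have hdiff := hvec_contract_diff d hsplit M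
  have hgoal : hvec (d-2) L M
      = (∑ k ∈ Finset.range M,
          ((-1:ℤ)^(M-k) * ((d-(k+1)).choose (d-(M+1)) : ℤ)
            + (-1:ℤ)^(M-(k+1)) * ((d-(k+2)).choose (d-(M+1)) : ℤ)) * (fvec L k : ℤ))
        + (fvec L M : ℤ) := by
    rw [hvec, Finset.sum_range_succ]
    have e1 : (-1:ℤ)^(M-M) * (((d-2)-M).choose ((d-2)-M) : ℤ) * (fvec L M : ℤ)
        = (fvec L M : ℤ) := by
      rw [Nat.sub_self, Nat.choose_self]; norm_num
    rw [e1]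
    congr 1
    refine Finset.sum_congr rfl (fun k hk => ?_)
    have hkM : k < M := Finset.mem_range.1 hk
    -- Pascal
    have h1 : d-(k+1) = (d-(k+2))+1 := by omega
    have h2 : d-(M+1) = ((d-2)-M)+1 := by omega
    have h3 : ((d-2)-k) = (d-(k+2)) := by omega
    have h4 : (d-2)-(M) = (d-2)-M := rfl
    have hpascal : (d-(k+1)).choose (d-(M+1))
        = (d-(k+2)).choose ((d-2)-M) + (d-(k+2)).choose (((d-2)-M)+1) := by
      rw [h1, h2, Nat.choose_succ_succ]
    have hsign : (M-k) = (M-(k+1))+1 := by omega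
    rw [h3, hpascal, hsign, ← h2, pow_succ]
    push_cast
    ring
  rw [hgoal, ← hdiff]
  ring

lemma hvec_contract_topidx {Γ C L : Set (Finset ℕ)} {d : ℕ}
    (hsplit : ∀ k, (fvec Γ k : ℤ) = (fvec C k : ℤ)
      + (if k = 0 then 0 else (fvec L (k-1) : ℤ))
      + (if k ≤ 1 then 0 else (fvec L (k-2) : ℤ)))
    (hd : 2 ≤ d) (hLtop : fvec L (d-1) = 0) :
    hvec d Γ d = hvec d C d := by
  have hdd : d = (d-1)+1 := by omega
  have hdiff := hvec_contract_diff d hsplit (d-1)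
  rw [← hdd] at hdiff
  have hzero : (∑ k ∈ Finset.range (d-1),
      ((-1:ℤ)^((d-1)-k) * ((d-(k+1)).choose (d-((d-1)+1)) : ℤ)
        + (-1:ℤ)^((d-1)-(k+1)) * ((d-(k+2)).choose (d-((d-1)+1)) : ℤ)) * (fvec L k : ℤ))
      = 0 := by
    refine Finset.sum_eq_zero (fun k hk => ?_)
    have hkM : k < d-1 := Finset.mem_range.1 hk
    have h1 : d-((d-1)+1) = 0 := by omega
    have h2 : (d-1)-k = ((d-1)-(k+1))+1 := by omega
    rw [h1, Nat.choose_zero_right, Nat.choose_zero_right, h2, pow_succ]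
    push_cast
    ring
  rw [← hdd] at hzero
  rw [hzero, hLtop] at hdiff
  simp at hdiff
  linarith

/- ######### simplex boundary ######### -/

lemma simplex_h_identity : ∀ i d : ℕ, i ≤ d →
    (∑ j ∈ Finset.range (i+1),
      (-1:ℤ)^(i-j) * ((d-j).choose (d-i) : ℤ) * ((d+1).choose j : ℤ)) = 1 := by
  intro i
  induction i with
  | zero => intro d _; simp
  | succ i ih =>
    intro d hd
    have e1 : ∀ j ∈ Finset.range (i+2),
        (-1:ℤ)^(i+1-j) * ((d-j).choose (d-(i+1)) : ℤ) * ((d+1).choose j : ℤ)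
        = (-1:ℤ)^(i+1-j) * ((d-j).choose (d-(i+1)) : ℤ) * ((d).choose j : ℤ)
          + (-1:ℤ)^(i+1-j) * ((d-j).choose (d-(i+1)) : ℤ)
            * (if j = 0 then (0:ℤ) else ((d).choose (j-1) : ℤ)) := by
      intro j _
      cases j with
      | zero => norm_num
      | succ m =>
          rw [if_neg (Nat.succ_ne_zero m)]
          have : (d+1).choose (m+1) = d.choose m + d.choose (m+1) := Nat.choose_succ_succ d m
          rw [this]
          push_cast
          ring_nf
    rw [Finset.sum_congr rfl e1, Finset.sum_add_distrib]
    -- second sum equals S(d-1, i) = 1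
    have e2 : (∑ j ∈ Finset.range (i+2),
        (-1:ℤ)^(i+1-j) * ((d-j).choose (d-(i+1)) : ℤ)
          * (if j = 0 then (0:ℤ) else ((d).choose (j-1) : ℤ)))
        = ∑ k ∈ Finset.range (i+1),
          (-1:ℤ)^(i-k) * (((d-1)-k).choose ((d-1)-i) : ℤ) * (((d-1)+1).choose k : ℤ) := by
      rw [Finset.sum_range_succ' (fun j => (-1:ℤ)^(i+1-j) * ((d-j).choose (d-(i+1)) : ℤ)
        * (if j = 0 then (0:ℤ) else ((d).choose (j-1) : ℤ))) (i+1)]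
      norm_num
      refine Finset.sum_congr rfl (fun k hk => ?_)
      have h1 : i+1-(k+1) = i-k := by omega
      have h2 : d-(k+1) = (d-1)-k := by omega
      have h3 : d-(i+1) = (d-1)-i := by omega
      have h4 : (d-1)+1 = d := by omega
      rw [h1, h2, h3, h4]
    rw [e2, ih (d-1) (by omega)]
    -- first sum is 0
    have e3 : (∑ j ∈ Finset.range (i+2),
        (-1:ℤ)^(i+1-j) * ((d-j).choose (d-(i+1)) : ℤ) * ((d).choose j : ℤ)) = 0 := by
      have e4 : ∀ j ∈ Finset.range (i+2),
          (-1:ℤ)^(i+1-j) * ((d-j).choose (d-(i+1)) : ℤ) * ((d).choose j : ℤ)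
          = (d.choose (i+1) : ℤ) * ((-1:ℤ)^(i+1-j) * ((i+1).choose j : ℤ)) := by
        intro j hj
        have hji : j ≤ i+1 := by
          have := Finset.mem_range.1 hj; omega
        have hsymm : (d-j).choose (d-(i+1)) = (d-j).choose (i+1-j) := by
          have h5 : (d-j) - (i+1-j) = d-(i+1) := by omega
          rw [← h5, Nat.choose_symm (by omega)]
        have hmul : d.choose (i+1) * (i+1).choose j
            = d.choose j * (d-j).choose (i+1-j) := Nat.choose_mul hji
        rw [hsymm]
        have := congrArg (fun x : ℕ => (x : ℤ)) hmul
        push_cast at this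
        linear_combination (-(-1:ℤ)^(i+1-j)) * this
      rw [Finset.sum_congr rfl e4, ← Finset.mul_sum]
      have e5 : (∑ j ∈ Finset.range (i+2), (-1:ℤ)^(i+1-j) * ((i+1).choose j : ℤ)) = 0 := by
        rw [← Finset.sum_range_reflect]
        have e6 : ∀ j ∈ Finset.range (i+2),
            (-1:ℤ)^(i+1-(i+2-1-j)) * ((i+1).choose (i+2-1-j) : ℤ)
            = (-1:ℤ)^j * ((i+1).choose j : ℤ) := by
          intro j hj
          have hji : j ≤ i+1 := by have := Finset.mem_range.1 hj; omega
          have h1 : i+2-1-j = i+1-j := by omega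
          have h2 : i+1-(i+1-j) = j := by omega
          rw [h1, h2, Nat.choose_symm hji]
        rw [Finset.sum_congr rfl e6]
        exact Int.alternating_sum_range_choose_of_ne (Nat.succ_ne_zero i)
      rw [e5, mul_zero]
    rw [e3, zero_add]

lemma fvec_simplexBoundary (V : Finset ℕ) (k : ℕ) (hk : k < V.card) :
    fvec {F | F ⊆ V ∧ F ≠ V} k = (V.card).choose k := by
  have he : {F ∈ {F : Finset ℕ | F ⊆ V ∧ F ≠ V} | F.card = k} = ↑(V.powersetCard k) := by
    ext F
    simp only [Set.mem_setOf_eq, Finset.mem_coe, Finset.mem_powersetCard]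
    constructor
    · rintro ⟨⟨h1, _⟩, h2⟩; exact ⟨h1, h2⟩
    · rintro ⟨h1, h2⟩
      refine ⟨⟨h1, fun h => ?_⟩, h2⟩
      subst h; omega
  rw [fvec, he, Set.ncard_coe_finset, Finset.card_powersetCard]

lemma hvec_simplexBoundary (V : Finset ℕ) (d : ℕ) (hd : V.card = d + 1) (m : ℕ) (hm : m ≤ d) :
    hvec d {F | F ⊆ V ∧ F ≠ V} m = 1 := by
  rw [hvec]
  have he : ∀ j ∈ Finset.range (m+1),
      (-1:ℤ)^(m-j) * ((d-j).choose (d-m) : ℤ) * (fvec {F | F ⊆ V ∧ F ≠ V} j : ℤ)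
      = (-1:ℤ)^(m-j) * ((d-j).choose (d-m) : ℤ) * ((d+1).choose j : ℤ) := by
    intro j hj
    have hjm : j ≤ m := by have := Finset.mem_range.1 hj; omega
    rw [fvec_simplexBoundary V j (by omega), hd]
  rw [Finset.sum_congr rfl he]
  exact simplex_h_identity m d hm

/- ######### facets ######### -/

lemma exists_facet_above {Γ : Set (Finset ℕ)} (hfin : Γ.Finite) {F : Finset ℕ} (hF : F ∈ Γ) :
    ∃ G, IsFacet Γ G ∧ F ⊆ G := by
  obtain ⟨G, hG, hmax⟩ := Set.Finite.exists_maximalFor (fun F : Finset ℕ => F.card)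
    {G ∈ Γ | F ⊆ G} (hfin.subset (fun G hG => hG.1)) ⟨F, hF, subset_refl F⟩
  refine ⟨G, ⟨hG.1, fun H hH hGH => ?_⟩, hG.2⟩
  have hHmem : H ∈ {G ∈ Γ | F ⊆ G} := ⟨hH, hG.2.trans hGH⟩
  exact Finset.eq_of_subset_of_card_le hGH
    (hmax hHmem (Finset.card_le_card hGH))

lemma facet_card_eq {Γ : Set (Finset ℕ)} (hfin : Γ.Finite) (hpure : PureComplex Γ) {d : ℕ}
    (hbdd : ∀ F ∈ Γ, F.card ≤ d) (htop : ∃ F ∈ Γ, F.card = d) {G : Finset ℕ}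
    (hG : IsFacet Γ G) : G.card = d := by
  obtain ⟨F₀, hF₀, hcard⟩ := htop
  obtain ⟨G₀, hG₀, hsub⟩ := exists_facet_above hfin hF₀
  have h1 : G₀.card = d := by
    have := Finset.card_le_card hsub
    have := hbdd G₀ hG₀.1
    omega
  rw [hpure G G₀ hG hG₀, h1]

/- ######### master ######### -/

theorem sed_master {Γ : Set (Finset ℕ)} (hsed : StronglyEdgeDecomposable Γ) :
    ∀ d : ℕ, DownClosed Γ → Γ.Finite → (∀ F ∈ Γ, F.card ≤ d) → (∃ F ∈ Γ, F.card = d) →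
      (∀ i ≤ d, hvec d Γ i = hvec d Γ (d-i)) ∧
      (∀ i : ℕ, i < d / 2 → hvec d Γ i ≤ hvec d Γ (i+1)) := by
  induction hsed with
  | trivialComplex =>
      intro d _ _ hbdd htop
      obtain ⟨F, hF, hc⟩ := htop
      have hd0 : d = 0 := by
        rw [Set.mem_singleton_iff] at hF; subst hF; simpa using hc.symm
      subst hd0
      refine ⟨fun i hi => ?_, fun i hi => by omega⟩
      interval_cases i
      norm_num
  | simplexBoundary V hV =>
      intro d _ _ hbdd htop
      have hcardV : V.card = d + 1 := by
        obtain ⟨F, hF, hc⟩ := htop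
        have hlt : F.card < V.card := Finset.card_lt_card (hF.1.ssubset_of_ne hF.2)
        obtain ⟨x, hx⟩ := hV
        have herase : V.erase x ∈ {F : Finset ℕ | F ⊆ V ∧ F ≠ V} := by
          refine ⟨Finset.erase_subset _ _, fun h => ?_⟩
          have := Finset.notMem_erase x V; rw [h] at this; exact this hx
        have h3 := hbdd _ herase
        rw [Finset.card_erase_of_mem hx] at h3
        have hVpos : 1 ≤ V.card := Finset.card_pos.2 ⟨x, hx⟩
        omega
      constructor
      · intro m hm
        rw [hvec_simplexBoundary V d hcardV m hm,
          hvec_simplexBoundary V d hcardV (d-m) (by omega)]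
      · intro m hm
        rw [hvec_simplexBoundary V d hcardV m (by omega),
          hvec_simplexBoundary V d hcardV (m+1) (by omega)]
  | contract Γ i j hij hpure hedge hlc hcon hlk ihc ihl =>
      intro d hdc hfin hbdd htop
      have hij' : i ≠ j := Nat.ne_of_lt hij
      have hpair : ({i,j} : Finset ℕ).card = 2 := Finset.card_pair hij'
      have hd2 : 2 ≤ d := by have := hbdd _ hedge; omega
      have hfacets : ∀ G, IsFacet Γ G → G.card = d :=
        fun G hG => facet_card_eq hfin hpure hbdd htop hG
      -- link properties
      have hLdc := link_downClosed hdc ({i,j} : Finset ℕ)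
      have hLfin := link_finite hfin ({i,j} : Finset ℕ)
      have hLbdd : ∀ G ∈ linkOf Γ {i,j}, G.card ≤ d - 2 := by
        rintro G ⟨hdis, hun⟩
        have := hbdd _ hun
        rw [Finset.card_union_of_disjoint hdis, hpair] at this
        omega
      have hLtop : ∃ G ∈ linkOf Γ {i,j}, G.card = d - 2 := by
        obtain ⟨G₀, hG₀f, hsub⟩ := exists_facet_above hfin hedge
        refine ⟨G₀ \ {i,j}, ⟨Finset.sdiff_disjoint, ?_⟩, ?_⟩
        · rw [Finset.sdiff_union_of_subset hsub]; exact hG₀f.1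
        · rw [Finset.card_sdiff_of_subset hsub, hfacets _ hG₀f, hpair]
      -- contraction properties
      have hCdc := contraction_downClosed hdc hij'
      have hCfin := contraction_finite hfin i j
      have hCbdd : ∀ F ∈ contraction Γ i j, F.card ≤ d := by
        rintro F (⟨h, _⟩ | ⟨F', hF', hiF', rfl⟩)
        · exact hbdd _ h
        · have h1 := Finset.card_union_le (F'.erase i) ({j} : Finset ℕ)
          rw [Finset.card_erase_of_mem hiF', Finset.card_singleton] at h1
          have h2 := hbdd _ hF'
          have h3 : 1 ≤ F'.card := Finset.card_pos.2 ⟨i, hiF'⟩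
          omega
      have hCtop : ∃ F ∈ contraction Γ i j, F.card = d := by
        by_cases hall : ∀ G, IsFacet Γ G → i ∈ G ∧ j ∈ G
        · exfalso
          have hcone : IsConeOver Γ j := by
            intro F hF
            obtain ⟨G, hGf, hsub⟩ := exists_facet_above hfin hF
            exact hdc G hGf.1 _ (Finset.insert_subset (hall G hGf).2 hsub)
          exact sed_not_cone
            (StronglyEdgeDecomposable.contract Γ i j hij hpure hedge hlc hcon hlk) j hcone
        · push_neg at hall
          obtain ⟨G, hGf, hGnot⟩ := hall
          by_cases hiG : i ∈ G
          · have hjG : j ∉ G := fun h => hGnot hiG h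
            refine ⟨G.erase i ∪ {j}, Or.inr ⟨G, hGf.1, hiG, rfl⟩, ?_⟩
            rw [shift_card hij' hiG hjG]; exact hfacets G hGf
          · exact ⟨G, Or.inl ⟨hGf.1, hiG⟩, hfacets G hGf⟩
      obtain ⟨symC, monC⟩ := ihc d hCdc hCfin hCbdd hCtop
      obtain ⟨symL, monL⟩ := ihl (d-2) hLdc hLfin hLbdd hLtop
      -- the f-vector relation, in ℤ
      have hsplit : ∀ k, (fvec Γ k : ℤ) = (fvec (contraction Γ i j) k : ℤ)
          + (if k = 0 then 0 else (fvec (linkOf Γ {i,j}) (k-1) : ℤ))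
          + (if k ≤ 1 then 0 else (fvec (linkOf Γ {i,j}) (k-2) : ℤ)) := by
        intro k
        rw [fvec_contract hdc hfin hij' hedge hlc k]
        push_cast
        split_ifs <;> norm_num
      have h00 : hvec d Γ 0 = hvec d (contraction Γ i j) 0 := by
        rw [hvec_zero_eq, hvec_zero_eq]
        have := hsplit 0
        norm_num at this
        exact_mod_cast this
      have hLtopf : fvec (linkOf Γ {i,j}) (d-1) = 0 := by
        rw [fvec]
        convert Set.ncard_empty (Finset ℕ)
        ext G
        simp only [Set.mem_setOf_eq, Set.mem_empty_iff_false, iff_false, not_and]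
        intro hG
        have := hLbdd G hG
        omega
      have hmid : ∀ m, 1 ≤ m → m ≤ d-1 →
          hvec d Γ m = hvec d (contraction Γ i j) m + hvec (d-2) (linkOf Γ {i,j}) (m-1) := by
        intro m h1 h2
        obtain ⟨M, rfl⟩ : ∃ M, m = M+1 := ⟨m-1, by omega⟩
        have := hvec_contract_mid hsplit (by omega : M+1 ≤ d-1) hd2
        simpa using this
      have htopg : hvec d Γ d = hvec d (contraction Γ i j) d :=
        hvec_contract_topidx hsplit hd2 hLtopf
      constructor
      · intro m hm
        by_cases hm0 : m = 0
        · subst hm0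
          rw [Nat.sub_zero, h00, htopg, symC 0 (Nat.zero_le d), Nat.sub_zero]
        · by_cases hmd : m = d
          · rw [hmd, Nat.sub_self, htopg, h00, symC 0 (Nat.zero_le d), Nat.sub_zero]
          · have h1 : 1 ≤ m := by omega
            have h2 : m ≤ d-1 := by omega
            rw [hmid m h1 h2, hmid (d-m) (by omega) (by omega), symC m hm,
              symL (m-1) (by omega)]
            have hidx : (d-2)-(m-1) = (d-m)-1 := by omega
            rw [hidx]
      · intro m hm
        have hdm : 2*(m+1) ≤ d := by omega
        by_cases hm0 : m = 0
        · subst hm0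
          rw [h00, hmid 1 le_rfl (by omega)]
          have hL0 : hvec (d-2) (linkOf Γ {i,j}) (1-1) = (fvec (linkOf Γ {i,j}) 0 : ℤ) :=
            hvec_zero_eq _ _
          have hpos : (0:ℤ) ≤ (fvec (linkOf Γ {i,j}) 0 : ℤ) := by positivity
          have := monC 0 hm
          rw [hL0]
          linarith
        · have h1 : 1 ≤ m := by omega
          have h2 : m+1 ≤ d-1 := by omega
          rw [hmid m h1 (by omega), hmid (m+1) (by omega) h2]
          have hmono1 := monC m hm
          have hmono2 := monL (m-1) (by omega)
          have hidx : (m-1)+1 = m := by omega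
          rw [hidx] at hmono2
          have hidx2 : (m+1)-1 = m := by omega
          rw [hidx2]
          linarith

/-- Lemma 2.4, Nevo. The `h`-vector of a `(d-1)`-dimensional strongly edge
decomposable complex satisfies `h_i = h_{d-i}` for `i = 0,…,d` and
`h_0 ≤ h_1 ≤ ⋯ ≤ h_{⌊d/2⌋}`. -/
theorem stmt6 (n d : ℕ) (Γ : Set (Finset ℕ))
    (hΓ : SimplicialComplexOn (Finset.Icc 1 n) Γ)
    (hdim : sdim Γ = (d : ℤ) - 1)
    (hsed : StronglyEdgeDecomposable Γ) :
    (∀ i ≤ d, hvec d Γ i = hvec d Γ (d - i)) ∧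
    (∀ i : ℕ, i < d / 2 → hvec d Γ i ≤ hvec d Γ (i + 1)) := by
  have hdc : DownClosed Γ := fun F hF G hG => hΓ.2.2 F hF G hG
  have hfin : Γ.Finite := Set.Finite.subset (Finset.Icc 1 n).powerset.finite_toSet
    (fun F hF => Finset.mem_coe.2 (Finset.mem_powerset.2 (hΓ.1 F hF)))
  have hne : Γ.Nonempty := ⟨∅, sed_empty_mem hsed⟩
  have hSne : ((fun F : Finset ℕ => (F.card : ℤ) - 1) '' Γ).Nonempty := hne.image _
  have hSfin := hfin.image (fun F : Finset ℕ => (F.card : ℤ) - 1)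
  have hbdd : ∀ F ∈ Γ, F.card ≤ d := by
    intro F hF
    have h1 : (F.card : ℤ) - 1 ≤ sdim Γ := le_csSup hSfin.bddAbove ⟨F, hF, rfl⟩
    rw [hdim] at h1
    omega
  have htop : ∃ F ∈ Γ, F.card = d := by
    have h1 : sdim Γ ∈ ((fun F : Finset ℕ => (F.card : ℤ) - 1) '' Γ) :=
      Set.Nonempty.csSup_mem hSne hSfin
    obtain ⟨F, hF, hEq⟩ := h1
    rw [hdim] at hEq
    beta_reduce at hEq
    exact ⟨F, hF, by omega⟩
  exact sed_master hsed d hdc hfin hbdd htop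
end
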